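/- arXiv:1303.5456 — 7 statements merged into one kernel-verified Lean document; each statement's English description precedes it below -/
import Mathlib

section
/- Let G = (V, E) be a weakly connected directed graph whose underlying undirected graph is bipartite, and A an Abelian group. Then the group of balanced functions h : V ∪ 𝔼 → A (satisfying h(ē) = -h(e) and summing to zero, alternating vertex and edge values, along every cycle in 𝔼) is isomorphic to A^(|V|). -/
/-- A directed multigraph: edges with a source and a target vertex. -/
structure Dgraph (V : Type) (E : Type) where
  src : E → V
  tgt : E → V

namespace Dgraph

variable {V E : Type}

/-- The symmetrization of a digraph: each edge together with its formal reversal.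
`Sum.inl e` is the edge `e` itself, `Sum.inr e` is its reversal `ē`. -/
def sym (G : Dgraph V E) : Dgraph V (E ⊕ E) where
  src := Sum.elim G.src G.tgt
  tgt := Sum.elim G.tgt G.src

/-- A cycle: a list of pairwise distinct edges, consecutively incident,
and closed (the target of the last edge is the source of the first).
The empty list is the trivial cycle. -/
def IsCycle (G : Dgraph V E) (l : List E) : Prop :=
  l.Nodup ∧ l.Chain' (fun a b => G.tgt a = G.src b) ∧
    ∀ h : l ≠ [], G.tgt (l.getLast h) = G.src (l.head h)

/-- Adjacency in the underlying undirected graph. -/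
def Adj (G : Dgraph V E) (x y : V) : Prop :=
  ∃ e, (G.src e = x ∧ G.tgt e = y) ∨ (G.src e = y ∧ G.tgt e = x)

/-- Weak connectivity: the underlying undirected graph is connected. -/
def WeaklyConnected (G : Dgraph V E) : Prop :=
  ∀ x y : V, Relation.ReflTransGen G.Adj x y

/-- The underlying undirected graph is bipartite. -/
def Bipartite (G : Dgraph V E) : Prop :=
  ∃ c : V → Bool, ∀ e, c (G.src e) ≠ c (G.tgt e)

variable (A : Type) [AddCommGroup A]

/-- A function on the symmetrized edge set taking opposite values on reversed edges. -/
def Antisym (f : E ⊕ E → A) : Prop :=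
  ∀ e : E, f (Sum.inr e) = - f (Sum.inl e)

/-- A function on edges is balanced if its sum along every cycle is zero. -/
def BalancedE (G : Dgraph V E) (f : E → A) : Prop :=
  ∀ l : List E, G.IsCycle l → (l.map f).sum = 0

/-- A pair of a function `g` on vertices and `f` on edges is balanced if the
alternating sum `g v₁ + f e₁ + ⋯ + g vₙ + f eₙ` along every cycle is zero
(the vertices of a cycle are exactly the sources of its edges). -/
def BalancedVE (G : Dgraph V E) (g : V → A) (f : E → A) : Prop :=
  ∀ l : List E, G.IsCycle l → (l.map (fun e => g (G.src e) + f e)).sum = 0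

variable {A}

lemma sum_map_add (l : List E) (f g : E → A) :
    (l.map (fun e => f e + g e)).sum = (l.map f).sum + (l.map g).sum := by
  induction l with
  | nil => simp
  | cons a t ih => simp only [List.map_cons, List.sum_cons, ih]; abel

lemma sum_map_neg (l : List E) (f : E → A) :
    (l.map (fun e => - f e)).sum = - (l.map f).sum := by
  induction l with
  | nil => simp
  | cons a t ih => simp only [List.map_cons, List.sum_cons, ih]; abel

lemma sum_map_eq_zero (l : List E) (f : E → A) (h : ∀ e, f e = 0) :
    (l.map f).sum = 0 := by
  induction l with
  | nil => simp
  | cons a t ih => simp [h, ih]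

variable (A)

/-- `HF(𝔼, A)`: the group of flexible-balanced functions on the symmetrized edges. -/
def HF (G : Dgraph V E) : AddSubgroup ((E ⊕ E) → A) where
  carrier := {f | Antisym A f ∧ BalancedE A G.sym f}
  zero_mem' :=
    ⟨fun e => by simp, fun l _ => sum_map_eq_zero l _ (fun e => by simp)⟩
  add_mem' := by
    intro f g hf hg
    refine ⟨fun e => ?_, fun l hl => ?_⟩
    · have h1 := hf.1 e; have h2 := hg.1 e
      simp only [Pi.add_apply]
      rw [h1, h2]; abel
    · have hmap : l.map (f + g) = l.map (fun e => f e + g e) := rfl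
      rw [hmap, sum_map_add l f g, hf.2 l hl, hg.2 l hl, add_zero]
  neg_mem' := by
    intro f hf
    refine ⟨fun e => ?_, fun l hl => ?_⟩
    · simp only [Pi.neg_apply]; rw [hf.1 e]
    · have hmap : l.map (-f) = l.map (fun e => - f e) := rfl
      rw [hmap, sum_map_neg l f, hf.2 l hl, neg_zero]

/-- `WF(V ∪ 𝔼, A)`: the group of flexible-balanced functions on vertices and edges,
encoded as pairs (function on vertices, function on symmetrized edges). -/
def WF (G : Dgraph V E) : AddSubgroup ((V → A) × ((E ⊕ E) → A)) where
  carrier := {p | Antisym A p.2 ∧ BalancedVE A G.sym p.1 p.2}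
  zero_mem' :=
    ⟨fun e => by simp, fun l _ => sum_map_eq_zero l _ (fun e => by simp)⟩
  add_mem' := by
    intro p q hp hq
    refine ⟨fun e => ?_, fun l hl => ?_⟩
    · have h1 := hp.1 e; have h2 := hq.1 e
      simp only [Prod.snd_add, Pi.add_apply]
      rw [h1, h2]; abel
    · have h := sum_map_add l (fun e => p.1 (G.sym.src e) + p.2 e)
        (fun e => q.1 (G.sym.src e) + q.2 e)
      simp only [Prod.fst_add, Prod.snd_add, Pi.add_apply]
      have heq : (l.map (fun e => (p.1 (G.sym.src e) + q.1 (G.sym.src e)) + (p.2 e + q.2 e))).sum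
          = (l.map (fun e => (p.1 (G.sym.src e) + p.2 e) + (q.1 (G.sym.src e) + q.2 e))).sum := by
        congr 1; apply List.map_congr_left; intro e _; abel
      rw [heq, h, hp.2 l hl, hq.2 l hl, add_zero]
  neg_mem' := by
    intro p hp
    refine ⟨fun e => ?_, fun l hl => ?_⟩
    · simp only [Prod.snd_neg, Pi.neg_apply]; rw [hp.1 e]
    · have h := sum_map_neg l (fun e => p.1 (G.sym.src e) + p.2 e)
      simp only [Prod.fst_neg, Prod.snd_neg, Pi.neg_apply]
      have heq : (l.map (fun e => -p.1 (G.sym.src e) + -p.2 e)).sum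
          = (l.map (fun e => -(p.1 (G.sym.src e) + p.2 e))).sum := by
        congr 1; apply List.map_congr_left; intro e _; abel
      rw [heq, h, hp.2 l hl, neg_zero]

/-- `BF(V, A)`: the group of flexible-balanceable functions on vertices. -/
def BF (G : Dgraph V E) : AddSubgroup (V → A) where
  carrier := {g | ∃ f : (E ⊕ E) → A, (g, f) ∈ WF A G}
  zero_mem' := ⟨0, (WF A G).zero_mem⟩
  add_mem' := by
    rintro g1 g2 ⟨f1, h1⟩ ⟨f2, h2⟩
    exact ⟨f1 + f2, (WF A G).add_mem h1 h2⟩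
  neg_mem' := by
    rintro g ⟨f, h⟩
    exact ⟨-f, (WF A G).neg_mem h⟩

/-- The subgroup of elements of order dividing 2. -/
def Two : AddSubgroup A where
  carrier := {a | a + a = 0}
  zero_mem' := by simp
  add_mem' := by
    intro a b ha hb
    have h : a + b + (a + b) = (a + a) + (b + b) := by abel
    simp only [Set.mem_setOf_eq] at *
    rw [h, ha, hb, add_zero]
  neg_mem' := by
    intro a ha
    simp only [Set.mem_setOf_eq] at *
    rw [← neg_add]; simp [ha]

/-- `HR(E, A)`: the group of rigid-balanced functions on edges. -/
def HR (G : Dgraph V E) : AddSubgroup (E → A) where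
  carrier := {f | BalancedE A G f}
  zero_mem' := fun l _ => sum_map_eq_zero l _ (fun e => by simp)
  add_mem' := by
    intro f g hf hg l hl
    have hmap : l.map (f + g) = l.map (fun e => f e + g e) := rfl
    rw [hmap, sum_map_add l f g, hf l hl, hg l hl, add_zero]
  neg_mem' := by
    intro f hf l hl
    have hmap : l.map (-f) = l.map (fun e => - f e) := rfl
    rw [hmap, sum_map_neg l f, hf l hl, neg_zero]

/-- `WR(V ∪ E, A)`: the group of rigid-balanced functions on vertices and edges,
encoded as pairs (function on vertices, function on edges). -/
def WR (G : Dgraph V E) : AddSubgroup ((V → A) × (E → A)) where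
  carrier := {p | BalancedVE A G p.1 p.2}
  zero_mem' := fun l _ => sum_map_eq_zero l _ (fun e => by simp)
  add_mem' := by
    intro p q hp hq l hl
    have h := sum_map_add l (fun e => p.1 (G.src e) + p.2 e)
      (fun e => q.1 (G.src e) + q.2 e)
    simp only [Prod.fst_add, Prod.snd_add, Pi.add_apply]
    have heq : (l.map (fun e => (p.1 (G.src e) + q.1 (G.src e)) + (p.2 e + q.2 e))).sum
        = (l.map (fun e => (p.1 (G.src e) + p.2 e) + (q.1 (G.src e) + q.2 e))).sum := by
      congr 1; apply List.map_congr_left; intro e _; abel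
    rw [heq, h, hp l hl, hq l hl, add_zero]
  neg_mem' := by
    intro p hp l hl
    have h := sum_map_neg l (fun e => p.1 (G.src e) + p.2 e)
    simp only [Prod.fst_neg, Prod.snd_neg, Pi.neg_apply]
    have heq : (l.map (fun e => -p.1 (G.src e) + -p.2 e)).sum
        = (l.map (fun e => -(p.1 (G.src e) + p.2 e))).sum := by
      congr 1; apply List.map_congr_left; intro e _; abel
    rw [heq, h, hp l hl, neg_zero]

variable {A}

/-- One-step directed reachability. -/
def Step (G : Dgraph V E) (x y : V) : Prop := ∃ e, G.src e = x ∧ G.tgt e = y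

/-- Directed reachability. -/
def Reach (G : Dgraph V E) : V → V → Prop := Relation.ReflTransGen G.Step

/-- Every vertex is reachable from every other vertex by a directed path. -/
def StronglyConnected (G : Dgraph V E) : Prop := ∀ x y : V, G.Reach x y

/-- Mutual directed reachability as an equivalence (setoid) on vertices;
its classes are the strongly connected components. -/
def scSetoid (G : Dgraph V E) : Setoid V where
  r x y := G.Reach x y ∧ G.Reach y x
  iseqv := ⟨fun _ => ⟨.refl, .refl⟩, fun h => ⟨h.2, h.1⟩,
    fun h1 h2 => ⟨h1.1.trans h2.1, h2.2.trans h1.2⟩⟩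

/-- The number `k̄(G)` of strongly connected components. -/
noncomputable def numSCC (G : Dgraph V E) : ℕ := Nat.card (Quotient G.scSetoid)

/-- The number `r(G)` of edges joining vertices in distinct strongly connected components. -/
noncomputable def numCrossEdges (G : Dgraph V E) : ℕ :=
  Nat.card {e : E // ¬ G.scSetoid.r (G.src e) (G.tgt e)}

/-- A directed path from `x` to `y`: pairwise distinct, consecutively incident edges,
starting at `x` and ending at `y`; the empty path joins each vertex to itself. -/
def IsPathFrom (G : Dgraph V E) (l : List E) (x y : V) : Prop :=
  l.Nodup ∧ l.Chain' (fun a b => G.tgt a = G.src b) ∧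
    ((l = [] ∧ x = y) ∨ ∃ h : l ≠ [], G.src (l.head h) = x ∧ G.tgt (l.getLast h) = y)

/-- Reorientation of the edges: edge `e` keeps its direction iff `o e = true`. -/
def orient (G : Dgraph V E) (o : E → Bool) : Dgraph V E where
  src e := if o e then G.src e else G.tgt e
  tgt e := if o e then G.tgt e else G.src e

/-- The underlying edge of a symmetrized edge. -/
def proj : E ⊕ E → E := Sum.elim id id

/-- A cycle in the underlying *undirected* graph: edges may be traversed in either
direction, and the underlying edges are pairwise distinct. -/
def IsUCycle (G : Dgraph V E) (l : List (E ⊕ E)) : Prop :=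
  (l.map proj).Nodup ∧ l.Chain' (fun a b => G.sym.tgt a = G.sym.src b) ∧
    ∀ h : l ≠ [], G.sym.tgt (l.getLast h) = G.sym.src (l.head h)

variable (A)

/-- A function on the edges of an undirected graph is balanced if its sum along
every undirected cycle (each edge contributing its value regardless of the
traversal direction) is zero. -/
def UBalanced (G : Dgraph V E) (f : E → A) : Prop :=
  ∀ l : List (E ⊕ E), G.IsUCycle l → (l.map (fun ee => f (proj ee))).sum = 0

/-- The subgroup of functions on vertices vanishing at a chosen base vertex. -/
def vanishing (v₀ : V) : AddSubgroup (V → A) where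
  carrier := {g | g v₀ = 0}
  zero_mem' := by simp
  add_mem' := by
    intro a b ha hb
    simp only [Set.mem_setOf_eq, Pi.add_apply] at *
    rw [ha, hb, add_zero]
  neg_mem' := by
    intro a ha
    simp only [Set.mem_setOf_eq, Pi.neg_apply] at *
    rw [ha, neg_zero]

variable {A}

/-- The subgraph induced by a strongly connected component `j`. -/
def compGraph (G : Dgraph V E) (j : Quotient G.scSetoid) :
    Dgraph {v : V // Quotient.mk G.scSetoid v = j}
      {e : E // Quotient.mk G.scSetoid (G.src e) = j ∧ Quotient.mk G.scSetoid (G.tgt e) = j} where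
  src e := ⟨G.src e.1, e.2.1⟩
  tgt e := ⟨G.tgt e.1, e.2.2⟩

end Dgraph

namespace StmtAux
open Dgraph List

variable {V E : Type} {A : Type} [AddCommGroup A]

lemma dup_decomp {α : Type} {a : α} : ∀ {l : List α}, [a, a] <+ l →
    ∃ s t, l = s ++ a :: t ∧ a ∈ t := by
  intro l h
  induction l with
  | nil => simp at h
  | cons b u ih =>
    cases h with
    | cons _ h =>
      obtain ⟨s', t, rfl, hm⟩ := ih h
      exact ⟨b :: s', t, rfl, hm⟩
    | cons_cons _ h =>
      exact ⟨[], u, rfl, (List.singleton_sublist).1 h⟩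

section Closed

variable (G : Dgraph V E)

def Closed (l : List E) : Prop :=
  ∀ x ∈ l.getLast?, ∀ y ∈ l.head?, G.tgt x = G.src y

lemma closed_iff {l : List E} :
    Closed G l ↔ ∀ h : l ≠ [], G.tgt (l.getLast h) = G.src (l.head h) := by
  cases l with
  | nil => simp [Closed]
  | cons a t =>
    constructor
    · intro H _
      exact H _ (List.getLast?_eq_getLast (by simp)) _ (List.head?_eq_head (by simp))
    · intro H x hx y hy
      rw [List.getLast?_eq_getLast (by simp)] at hx
      rw [List.head?_eq_head (by simp)] at hy
      cases Option.some_injective _ hx.symm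
      cases Option.some_injective _ hy.symm
      exact H (by simp)

lemma isCycle_iff {l : List E} :
    G.IsCycle l ↔ l.Nodup ∧ l.Chain' (fun a b => G.tgt a = G.src b) ∧ Closed G l := by
  rw [IsCycle, closed_iff]

lemma rot {s t : List E}
    (hch : (s ++ t).Chain' (fun a b => G.tgt a = G.src b)) (hcl : Closed G (s ++ t)) :
    (t ++ s).Chain' (fun a b => G.tgt a = G.src b) ∧ Closed G (t ++ s) := by
  rcases eq_or_ne s [] with rfl | hs
  · simpa using ⟨hch, hcl⟩
  rcases eq_or_ne t [] with rfl | ht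
  · constructor
    · simpa using hch
    · simpa [Closed] using hcl
  rcases List.isChain_append.1 hch with ⟨h1, h2, h3⟩
  have hlink1 : G.tgt (t.getLast ht) = G.src (s.head hs) := by
    apply hcl
    · rw [List.getLast?_append_of_ne_nil _ ht]
      exact List.getLast?_eq_getLast ht
    · rw [List.head?_append_of_ne_nil _ hs]  -- name guess
      exact List.head?_eq_head hs
  constructor
  · refine List.isChain_append.2 ⟨h2, h1, ?_⟩
    intro x hx y hy
    rw [List.getLast?_eq_getLast ht] at hx
    rw [List.head?_eq_head hs] at hy
    cases Option.some_injective _ hx.symm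
    cases Option.some_injective _ hy.symm
    exact hlink1
  · intro x hx y hy
    rw [List.getLast?_append_of_ne_nil _ hs, List.getLast?_eq_getLast hs] at hx
    rw [List.head?_append_of_ne_nil _ ht, List.head?_eq_head ht] at hy
    cases Option.some_injective _ hx.symm
    cases Option.some_injective _ hy.symm
    exact h3 _ (List.getLast?_eq_getLast hs) _ (List.head?_eq_head ht)

end Closed

section Sum
variable (G : Dgraph V E)

lemma closed_sum (F : E → A)
    (hcyc : ∀ l, G.IsCycle l → (l.map F).sum = 0) :
    ∀ (n : ℕ) (l : List E), l.length ≤ n →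
      l.Chain' (fun a b => G.tgt a = G.src b) → Closed G l → (l.map F).sum = 0 := by
  intro n
  induction n with
  | zero =>
    intro l hl _ _
    rw [List.length_eq_zero_iff.1 (Nat.le_zero.1 hl)]
    simp
  | succ n ih =>
    intro l hl hch hcl
    by_cases hnd : l.Nodup
    · exact hcyc l ((isCycle_iff G).2 ⟨hnd, hch, hcl⟩)
    · rw [List.nodup_iff_sublist] at hnd
      push_neg at hnd
      obtain ⟨a, ha⟩ := hnd
      obtain ⟨s, t, rfl, hmt⟩ := dup_decomp ha
      -- rotate so that duplicate is at head
      obtain ⟨hch', hcl'⟩ := rot G hch hcl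
      obtain ⟨p, q, rfl⟩ := List.append_of_mem hmt
      -- now rotated list is (a :: (p ++ a :: q)) ++ s = (a :: p) ++ (a :: (q ++ s))
      have hre : (a :: (p ++ a :: q)) ++ s = (a :: p) ++ (a :: (q ++ s)) := by simp
      rw [hre] at hch' hcl'
      -- split
      rcases List.isChain_append.1 hch' with ⟨h1, h2, h3⟩
      have hlink : G.tgt ((a :: p).getLast (by simp)) = G.src a := by
        have := h3 _ (List.getLast?_eq_getLast (by simp)) _ (List.head?_eq_head (by simp))
        simpa using this
      have hc1 : Closed G (a :: p) := by
        intro x hx y hy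
        rw [List.getLast?_eq_getLast (by simp)] at hx
        rw [List.head?_eq_head (by simp)] at hy
        cases Option.some_injective _ hx.symm
        cases Option.some_injective _ hy.symm
        simpa using hlink
      have hc2 : Closed G (a :: (q ++ s)) := by
        intro x hx y hy
        rw [List.getLast?_eq_getLast (by simp)] at hx
        rw [List.head?_eq_head (by simp)] at hy
        cases Option.some_injective _ hx.symm
        cases Option.some_injective _ hy.symm
        have := hcl' _ (by rw [List.getLast?_append_of_ne_nil _ (by simp : a :: (q++s) ≠ [])]
                           exact List.getLast?_eq_getLast (by simp))
                      _ (by rw [List.head?_append_of_ne_nil _ (by simp : a :: p ≠ [])]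
                            exact List.head?_eq_head (by simp))
        simpa using this
      have hlen : (s ++ (a :: (p ++ a :: q))).length ≤ n + 1 := hl
      simp only [List.length_append, List.length_cons] at hlen
      have hs1 : ((a :: p).map F).sum = 0 := by
        apply ih _ (by simp; omega) h1 hc1
      have hs2 : ((a :: (q ++ s)).map F).sum = 0 := by
        apply ih _ (by simp; omega) h2 hc2
      have : ((s ++ (a :: (p ++ a :: q))).map F).sum
          = ((a :: p).map F).sum + ((a :: (q ++ s)).map F).sum := by
        simp only [List.map_append, List.sum_append, List.map_cons, List.sum_cons]
        abel
      rw [this, hs1, hs2, add_zero]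

end Sum

section Walk
variable (G : Dgraph V E)

inductive W : V → V → List E → Prop
  | nil (x) : W x x []
  | cons (e) {y z l} (h1 : G.tgt e = y) (hw : W y z l) : W (G.src e) z (e :: l)

variable {G}

lemma W.single {e : E} {x y : V} (h1 : G.src e = x) (h2 : G.tgt e = y) : W G x y [e] := by
  subst h1; exact W.cons e h2 (W.nil y)

lemma W.append : ∀ {x y z l₁ l₂}, W G x y l₁ → W G y z l₂ → W G x z (l₁ ++ l₂) := by
  intro x y z l₁ l₂ h1 h2
  induction h1 with
  | nil => simpa using h2
  | cons e he hw ih => exact W.cons e he (ih h2)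

lemma W.head_src : ∀ {x y l} (_ : W G x y l) (h : l ≠ []), G.src (l.head h) = x := by
  intro x y l hw h
  cases hw with
  | nil => exact absurd rfl h
  | cons e he hw => simp

lemma W.getLast_tgt : ∀ {x y l} (hw : W G x y l) (h : l ≠ []), G.tgt (l.getLast h) = y := by
  intro x y l hw
  induction hw with
  | nil => intro h; exact absurd rfl h
  | cons e he hw ih =>
    intro h
    rename_i y' z l'
    rcases eq_or_ne l' [] with rfl | hl
    · cases hw; simpa using he
    · rw [List.getLast_cons hl]
      exact ih hl

lemma W.chain' : ∀ {x y l}, W G x y l → l.Chain' (fun a b => G.tgt a = G.src b) := by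
  intro x y l hw
  induction hw with
  | nil => exact List.isChain_nil
  | cons e he hw ih =>
    refine List.isChain_cons.2 ⟨?_, ih⟩
    intro b hb
    rename_i y' z l'
    rcases l' with _ | ⟨c, m⟩
    · simp at hb
    · rw [List.head?_eq_head (by simp)] at hb
      cases Option.some_injective _ hb.symm
      rw [he]
      exact (hw.head_src (by simp)).symm

lemma W.closed {x l} (hw : W G x x l) : Closed G l := by
  rw [closed_iff]
  intro h
  rw [hw.getLast_tgt h, hw.head_src h]

/-- swap of a symmetrized edge -/
def swp : E ⊕ E → E ⊕ E := Sum.elim Sum.inr Sum.inl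

@[simp] lemma sym_src_swp (ee : E ⊕ E) : G.sym.src (swp ee) = G.sym.tgt ee := by
  cases ee <;> rfl

@[simp] lemma sym_tgt_swp (ee : E ⊕ E) : G.sym.tgt (swp ee) = G.sym.src ee := by
  cases ee <;> rfl

lemma W.reverse : ∀ {x y : V} {l}, W G.sym x y l → W G.sym y x (l.reverse.map swp) := by
  intro x y l hw
  induction hw with
  | nil => simpa using W.nil _
  | cons e he hw ih =>
    rename_i y' z l'
    have : (e :: l').reverse.map swp = l'.reverse.map swp ++ [swp e] := by simp
    rw [this]
    exact ih.append (W.single (by simp [he]) (by simp))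

lemma exists_walk (hG : ∀ x y : V, Relation.ReflTransGen (fun u v : V =>
      ∃ e, (G.src e = u ∧ G.tgt e = v) ∨ (G.src e = v ∧ G.tgt e = u)) x y)
    (x y : V) : ∃ l, W G.sym x y l := by
  induction hG x y with
  | refl => exact ⟨[], W.nil x⟩
  | tail h hadj ih =>
    obtain ⟨l, hl⟩ := ih
    obtain ⟨e, he | he⟩ := hadj
    · exact ⟨l ++ [Sum.inl e], hl.append (W.single he.1 he.2)⟩
    · exact ⟨l ++ [Sum.inr e], hl.append (W.single he.2 he.1)⟩

end Walk
end StmtAux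

namespace StmtAux
open Dgraph List
variable {V E : Type} {A : Type} [AddCommGroup A]

lemma tele_aux (G : Dgraph V E) (ψ : V → A) :
    ∀ (l : List E) (h : l ≠ []), l.Chain' (fun a b => G.tgt a = G.src b) →
      (l.map (fun e => ψ (G.tgt e) - ψ (G.src e))).sum
        = ψ (G.tgt (l.getLast h)) - ψ (G.src (l.head h)) := by
  intro l
  induction l with
  | nil => intro h; exact absurd rfl h
  | cons a t ih =>
    intro h hch
    rcases eq_or_ne t [] with rfl | ht
    · simp
    · have hch' := List.isChain_cons.1 hch
      have hlink : G.tgt a = G.src (t.head ht) := hch'.1 _ (List.head?_eq_head ht)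
      rw [List.map_cons, List.sum_cons, ih ht hch'.2, List.getLast_cons ht]
      simp only [List.head_cons]
      rw [hlink]
      abel

lemma tele (G : Dgraph V E) (ψ : V → A) (l : List E)
    (hch : l.Chain' fun a b => G.tgt a = G.src b)
    (hcl : ∀ h : l ≠ [], G.tgt (l.getLast h) = G.src (l.head h)) :
    (l.map (fun e => ψ (G.tgt e) - ψ (G.src e))).sum = 0 := by
  rcases eq_or_ne l [] with rfl | h
  · simp
  · rw [tele_aux G ψ l h hch, hcl h, sub_self]

def eps (c : V → Bool) (v₀ v : V) (a : A) : A := if c v = c v₀ then a else -a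

lemma eps_add (c : V → Bool) (v₀ v : V) (a b : A) :
    eps c v₀ v (a + b) = eps c v₀ v a + eps c v₀ v b := by
  unfold eps; split
  · rfl
  · exact neg_add a b

lemma eps_zero (c : V → Bool) (v₀ v : V) : eps c v₀ v (0 : A) = 0 := by
  unfold eps; split <;> simp

lemma eps_self (c : V → Bool) (v₀ : V) (a : A) : eps c v₀ v₀ a = a := by simp [eps]

lemma eps_flip {c : V → Bool} {v₀ x y : V} (hxy : c x ≠ c y) (a : A) :
    eps c v₀ y a = - eps c v₀ x a := by
  unfold eps
  cases hx : c x <;> cases hy : c y <;> cases hv : c v₀ <;> simp_all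

variable (A) in
def psi (G : Dgraph V E) (c : V → Bool) (hc : ∀ e, c (G.src e) ≠ c (G.tgt e)) (v₀ : V) :
    (V → A) →+ Dgraph.WF A G where
  toFun φ := ⟨(fun v => eps c v₀ v (φ v₀),
      fun ee => φ (G.sym.tgt ee) - φ (G.sym.src ee) - eps c v₀ (G.sym.src ee) (φ v₀)), by
    constructor
    · intro e
      show φ (G.sym.tgt (Sum.inr e)) - φ (G.sym.src (Sum.inr e))
          - eps c v₀ (G.sym.src (Sum.inr e)) (φ v₀)
        = -(φ (G.sym.tgt (Sum.inl e)) - φ (G.sym.src (Sum.inl e))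
          - eps c v₀ (G.sym.src (Sum.inl e)) (φ v₀))
      have h1 : G.sym.src (Sum.inr e) = G.tgt e := rfl
      have h2 : G.sym.tgt (Sum.inr e) = G.src e := rfl
      have h3 : G.sym.src (Sum.inl e) = G.src e := rfl
      have h4 : G.sym.tgt (Sum.inl e) = G.tgt e := rfl
      rw [h1, h2, h3, h4, eps_flip (hc e)]
      abel
    · intro l hl
      have h2 := tele G.sym φ l hl.2.1 hl.2.2
      rw [← h2]
      congr 1
      apply List.map_congr_left
      intro ee _
      show eps c v₀ (G.sym.src ee) (φ v₀)
          + (φ (G.sym.tgt ee) - φ (G.sym.src ee) - eps c v₀ (G.sym.src ee) (φ v₀)) = _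
      abel⟩
  map_zero' := by
    apply Subtype.ext
    apply Prod.ext
    · funext v; simp [eps_zero]
    · funext ee; simp [eps_zero]
  map_add' φ₁ φ₂ := by
    apply Subtype.ext
    apply Prod.ext
    · funext v
      show eps c v₀ v ((φ₁ + φ₂) v₀) = eps c v₀ v (φ₁ v₀) + eps c v₀ v (φ₂ v₀)
      rw [Pi.add_apply, eps_add]
    · funext ee
      show (φ₁ + φ₂) (G.sym.tgt ee) - (φ₁ + φ₂) (G.sym.src ee)
          - eps c v₀ (G.sym.src ee) ((φ₁ + φ₂) v₀) = _
      simp only [Pi.add_apply, eps_add]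
      show _ = (φ₁ (G.sym.tgt ee) - φ₁ (G.sym.src ee) - eps c v₀ (G.sym.src ee) (φ₁ v₀))
          + (φ₂ (G.sym.tgt ee) - φ₂ (G.sym.src ee) - eps c v₀ (G.sym.src ee) (φ₂ v₀))
      abel

def arrowAddEquiv {α β : Type} (e : α ≃ β) : (α → A) ≃+ (β → A) where
  toFun f := f ∘ e.symm
  invFun f := f ∘ e
  left_inv f := by funext x; simp
  right_inv f := by funext x; simp
  map_add' f g := rfl

end StmtAux




/-- For a finite weakly connected directed graph whose underlying
undirected graph is bipartite, the group `WF(V ∪ 𝔼, A)` of balanced functions on vertices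
and symmetrized edges is isomorphic to `A^(|V|)`. -/
theorem stmt1 (V E : Type) [Fintype V] (A : Type) [AddCommGroup A]
    (G : Dgraph V E) (hG : G.WeaklyConnected) (hB : G.Bipartite) :
    Nonempty (Dgraph.WF A G ≃+ (Fin (Fintype.card V) → A)) := by
  classical
  obtain ⟨c, hc⟩ := hB
  rcases isEmpty_or_nonempty V with hV | hV
  · haveI := hV
    haveI : IsEmpty E := Function.isEmpty G.src
    haveI : Subsingleton (V → A) := ⟨fun a b => funext fun v => isEmptyElim v⟩
    haveI : Subsingleton ((E ⊕ E) → A) := ⟨fun a b => funext fun e => isEmptyElim e⟩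
    haveI : Subsingleton (Dgraph.WF A G) := ⟨fun a b => Subtype.ext (Subsingleton.elim _ _)⟩
    haveI : Subsingleton (Fin (Fintype.card V) → A) :=
      ⟨fun a b => funext fun i => absurd i.isLt (by simp [Fintype.card_eq_zero])⟩
    exact ⟨{ toFun := fun _ => 0, invFun := fun _ => 0,
             left_inv := fun x => Subsingleton.elim _ _,
             right_inv := fun x => Subsingleton.elim _ _,
             map_add' := fun a b => Subsingleton.elim _ _ }⟩
  · obtain ⟨v₀⟩ := hV
    set Ψ := StmtAux.psi A G c hc v₀ with hΨ
    have hinj : Function.Injective Ψ := by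
      rw [injective_iff_map_eq_zero]
      intro φ h0
      have h0' : (Ψ φ).val = 0 := by rw [h0]; rfl
      have hg : ∀ v, StmtAux.eps c v₀ v (φ v₀) = 0 :=
        fun v => congrFun (congrArg Prod.fst h0') v
      have ha : φ v₀ = 0 := by
        have := hg v₀; rwa [StmtAux.eps_self] at this
      have hf : ∀ ee, φ (G.sym.tgt ee) - φ (G.sym.src ee)
          - StmtAux.eps c v₀ (G.sym.src ee) (φ v₀) = 0 :=
        fun ee => congrFun (congrArg Prod.snd h0') ee
      have hstep : ∀ e : E, φ (G.tgt e) = φ (G.src e) := by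
        intro e
        have h5 := hf (Sum.inl e)
        have h3 : G.sym.src (Sum.inl e) = G.src e := rfl
        have h4 : G.sym.tgt (Sum.inl e) = G.tgt e := rfl
        rw [h3, h4, ha, StmtAux.eps_zero, sub_zero, sub_eq_zero] at h5
        exact h5
      have hconst : ∀ v, φ v = φ v₀ := by
        intro v
        induction hG v₀ v with
        | refl => rfl
        | tail h hadj ih =>
          obtain ⟨e, he | he⟩ := hadj
          · rw [← he.2, hstep e, he.1, ih]
          · rw [← he.1, ← hstep e, he.2, ih]
      funext v
      rw [hconst v, ha]
      rfl
    have hsurj : Function.Surjective Ψ := by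
      rintro ⟨⟨g, f⟩, hm⟩
      have hm' : Dgraph.Antisym A f ∧ Dgraph.BalancedVE A G.sym g f := hm
      obtain ⟨hanti, hbal⟩ := hm'
      have h2 : ∀ e : E, g (G.tgt e) = - g (G.src e) := by
        intro e
        have hcyc : G.sym.IsCycle [Sum.inl e, Sum.inr e] := by
          refine ⟨by simp, by simp [Dgraph.sym, List.Chain', List.isChain_pair], ?_⟩
          intro h
          simp [Dgraph.sym]
        have hs := hbal _ hcyc
        simp only [List.map_cons, List.map_nil, List.sum_cons, List.sum_nil, add_zero] at hs
        have h3 : G.sym.src (Sum.inl e) = G.src e := rfl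
        have h4 : G.sym.src (Sum.inr e) = G.tgt e := rfl
        rw [h3, h4, hanti e] at hs
        have h6 : g (G.src e) + g (G.tgt e) = 0 := by
          rw [← hs]; abel
        exact eq_neg_of_add_eq_zero_right h6
      have h2' : ∀ e : E, g (G.src e) = - g (G.tgt e) := by
        intro e; rw [h2 e, neg_neg]
      set a := g v₀ with haa
      have gform : ∀ v, g v = StmtAux.eps c v₀ v a := by
        intro v
        induction hG v₀ v with
        | refl => rw [StmtAux.eps_self]
        | @tail y z h hadj ih =>
          obtain ⟨e, he | he⟩ := hadj
          · have hcyz : c y ≠ c z := by rw [← he.1, ← he.2]; exact hc e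
            rw [StmtAux.eps_flip hcyz, ← ih, ← he.1, ← h2 e, he.2]
          · have hcyz : c y ≠ c z := by rw [← he.1, ← he.2]; exact fun hh => hc e hh.symm
            rw [StmtAux.eps_flip hcyz, ← ih, ← he.2, ← h2' e, he.1]
      set F : E ⊕ E → A := fun e => g (G.sym.src e) + f e with hF
      have Fcyc : ∀ l, G.sym.IsCycle l → (l.map F).sum = 0 := hbal
      have Fanti : ∀ ee, F (StmtAux.swp ee) = - F ee := by
        intro ee
        cases ee with
        | inl e =>
          show g (G.sym.src (Sum.inr e)) + f (Sum.inr e)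
            = -(g (G.sym.src (Sum.inl e)) + f (Sum.inl e))
          have h3 : G.sym.src (Sum.inl e) = G.src e := rfl
          have h4 : G.sym.src (Sum.inr e) = G.tgt e := rfl
          rw [h3, h4, h2 e, hanti e]; abel
        | inr e =>
          show g (G.sym.src (Sum.inl e)) + f (Sum.inl e)
            = -(g (G.sym.src (Sum.inr e)) + f (Sum.inr e))
          have h3 : G.sym.src (Sum.inl e) = G.src e := rfl
          have h4 : G.sym.src (Sum.inr e) = G.tgt e := rfl
          rw [h3, h4, h2' e, hanti e]; abel
      have hwalks : ∀ v : V, ∃ l, StmtAux.W G.sym v₀ v l :=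
        fun v => StmtAux.exists_walk hG v₀ v
      choose wk hwk using hwalks
      set φ : V → A := fun v => a + ((wk v).map F).sum with hφ
      have hφ0 : φ v₀ = a := by
        have hz := StmtAux.closed_sum G.sym F Fcyc (wk v₀).length (wk v₀) le_rfl
          (hwk v₀).chain' (hwk v₀).closed
        show a + ((wk v₀).map F).sum = a
        rw [hz, add_zero]
      have hrev : ∀ (l : List (E ⊕ E)), ((l.reverse.map StmtAux.swp).map F).sum
          = - (l.map F).sum := by
        intro l
        rw [List.map_map]
        have : F ∘ StmtAux.swp = fun ee => - F ee := funext Fanti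
        rw [this, Dgraph.sum_map_neg, List.map_reverse, List.sum_reverse]
      have hkey : ∀ ee : E ⊕ E, φ (G.sym.tgt ee) - φ (G.sym.src ee) = F ee := by
        intro ee
        have hwcl : StmtAux.W G.sym v₀ v₀
            ((wk (G.sym.src ee) ++ [ee]) ++ (wk (G.sym.tgt ee)).reverse.map StmtAux.swp) :=
          ((hwk _).append (StmtAux.W.single rfl rfl)).append (hwk _).reverse
        have hz := StmtAux.closed_sum G.sym F Fcyc _ _ le_rfl hwcl.chain' hwcl.closed
        rw [List.map_append, List.sum_append, List.map_append, List.sum_append, hrev] at hz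
        simp only [List.map_cons, List.map_nil, List.sum_cons, List.sum_nil, add_zero] at hz
        have h5 : F ee - (((wk (G.sym.tgt ee)).map F).sum - ((wk (G.sym.src ee)).map F).sum)
            = 0 := by
          rw [show F ee - (((wk (G.sym.tgt ee)).map F).sum - ((wk (G.sym.src ee)).map F).sum)
            = ((wk (G.sym.src ee)).map F).sum + F ee + -((wk (G.sym.tgt ee)).map F).sum
            from by abel, hz]
        rw [sub_eq_zero] at h5
        show (a + ((wk (G.sym.tgt ee)).map F).sum) - (a + ((wk (G.sym.src ee)).map F).sum)
          = F ee
        rw [h5]; abel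
      refine ⟨φ, ?_⟩
      apply Subtype.ext
      apply Prod.ext
      · funext v
        show StmtAux.eps c v₀ v (φ v₀) = g v
        rw [hφ0]
        exact (gform v).symm
      · funext ee
        show φ (G.sym.tgt ee) - φ (G.sym.src ee) - StmtAux.eps c v₀ (G.sym.src ee) (φ v₀)
          = f ee
        rw [hkey ee, hφ0, ← gform]
        show g (G.sym.src ee) + f ee - g (G.sym.src ee) = f ee
        abel
    exact ⟨(AddEquiv.ofBijective Ψ ⟨hinj, hsurj⟩).symm.trans
      (StmtAux.arrowAddEquiv (Fintype.equivFin V))⟩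
end

section
/- Let G = (V, E) be a weakly connected directed graph whose underlying undirected graph is not bipartite, and A an Abelian group. Then the group of balanced functions h : V ∪ 𝔼 → A is isomorphic to A₂ × A^(|V|-1), where A₂ = {a ∈ A : 2a = 0}. -/
namespace Stmt2Aux

open Dgraph

variable {V E F : Type}

/-- Walk predicate: `Ch H x l y` means `l` is a walk from `x` to `y`. -/
def Ch (H : Dgraph V F) : V → List F → V → Prop
  | x, [], y => x = y
  | x, e :: l, y => H.src e = x ∧ Ch H (H.tgt e) l y

lemma ch_append {H : Dgraph V F} :
    ∀ {l : List F} {m : List F} {x y z : V}, Ch H x l y → Ch H y m z → Ch H x (l ++ m) z := by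
  intro l
  induction l with
  | nil => intro m x y z h1 h2; cases h1; exact h2
  | cons e t ih =>
    intro m x y z h1 h2
    exact ⟨h1.1, ih h1.2 h2⟩

lemma ch_split {H : Dgraph V F} :
    ∀ {l : List F} {m : List F} {x z : V}, Ch H x (l ++ m) z → ∃ y, Ch H x l y ∧ Ch H y m z := by
  intro l
  induction l with
  | nil => intro m x z h; exact ⟨x, rfl, h⟩
  | cons e t ih =>
    intro m x z h
    obtain ⟨y, h1, h2⟩ := ih h.2
    exact ⟨y, ⟨h.1, h1⟩, h2⟩

lemma ch_chain' {H : Dgraph V F} :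
    ∀ {l : List F} {x y : V}, Ch H x l y → l.Chain' (fun a b => H.tgt a = H.src b) := by
  intro l
  induction l with
  | nil => intro x y _; exact List.isChain_nil
  | cons e t ih =>
    intro x y h
    cases t with
    | nil => exact List.isChain_singleton _
    | cons e' t' =>
      exact List.IsChain.cons_cons h.2.1.symm (ih h.2)

lemma ch_head {H : Dgraph V F} :
    ∀ {l : List F} {x y : V} (h : l ≠ []), Ch H x l y → H.src (l.head h) = x := by
  intro l x y h hc
  cases l with
  | nil => exact absurd rfl h
  | cons e t => exact hc.1

lemma ch_last {H : Dgraph V F} :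
    ∀ {l : List F} {x y : V} (h : l ≠ []), Ch H x l y → H.tgt (l.getLast h) = y := by
  intro l
  induction l with
  | nil => intro x y h; exact absurd rfl h
  | cons e t ih =>
    intro x y h hc
    cases t with
    | nil => cases hc.2; rfl
    | cons e' t' =>
      rw [List.getLast_cons (by simp)]
      exact ih (by simp) hc.2

lemma ch_of_chain' {H : Dgraph V F} :
    ∀ (l : List F) (h : l ≠ []), l.Chain' (fun a b => H.tgt a = H.src b) →
      Ch H (H.src (l.head h)) l (H.tgt (l.getLast h)) := by
  intro l
  induction l with
  | nil => intro h; exact absurd rfl h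
  | cons e t ih =>
    intro h hc
    cases t with
    | nil => exact ⟨rfl, rfl⟩
    | cons e' t' =>
      refine ⟨rfl, ?_⟩
      have h2 := ih (by simp) hc.tail
      have : H.tgt e = H.src e' := (List.isChain_cons_cons.mp hc).1
      rw [List.getLast_cons (by simp : (e' :: t') ≠ [])]
      rw [this]
      exact h2

lemma not_nodup_split {α : Type _} :
    ∀ {l : List α}, ¬ l.Nodup → ∃ (a : α) (s t u : List α), l = s ++ a :: (t ++ a :: u) := by
  intro l
  induction l with
  | nil => intro h; exact absurd List.nodup_nil h
  | cons a t ih =>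
    intro h
    by_cases ha : a ∈ t
    · obtain ⟨s, u, rfl⟩ := List.mem_iff_append.mp ha
      exact ⟨a, [], s, u, rfl⟩
    · have : ¬ t.Nodup := fun hn => h (List.nodup_cons.mpr ⟨ha, hn⟩)
      obtain ⟨b, s, u, w, rfl⟩ := ih this
      exact ⟨b, a :: s, u, w, rfl⟩

lemma ch_telescope {A : Type _} [AddCommGroup A] {H : Dgraph V F} (h : V → A) :
    ∀ {l : List F} {x y : V}, Ch H x l y →
      (l.map (fun e => h (H.tgt e) - h (H.src e))).sum = h y - h x := by
  intro l
  induction l with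
  | nil => intro x y hc; cases hc; simp
  | cons e t ih =>
    intro x y hc
    rw [List.map_cons, List.sum_cons, ih hc.2, hc.1]
    abel

lemma sum_closed {A : Type _} [AddCommGroup A] {H : Dgraph V F} (f : F → A)
    (hf : ∀ l, H.IsCycle l → (l.map f).sum = 0) :
    ∀ (n : ℕ) (l : List F), l.length ≤ n → ∀ x : V, Ch H x l x → (l.map f).sum = 0 := by
  intro n
  induction n with
  | zero =>
    intro l hl x _
    rw [List.length_eq_zero_iff.mp (Nat.le_zero.mp hl)]; rfl
  | succ n ih =>
    intro l hl x hc
    by_cases hnd : l.Nodup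
    · refine hf l ⟨hnd, ch_chain' hc, fun h => ?_⟩
      rw [ch_last h hc, ch_head h hc]
    · obtain ⟨a, s, t, u, rfl⟩ := not_nodup_split hnd
      obtain ⟨y1, hs, hrest⟩ := ch_split hc
      obtain ⟨ha1, hrest2⟩ := hrest
      obtain ⟨y2, ht, hau⟩ := ch_split hrest2
      obtain ⟨ha2, hu⟩ := hau
      have hloop1 : Ch H (H.src a) (a :: t) (H.src a) := ⟨rfl, by rw [ha2]; exact ht⟩
      have hloop2 : Ch H x (s ++ a :: u) x := ch_append hs ⟨ha1, hu⟩
      have len : (s ++ a :: (t ++ a :: u)).length = s.length + t.length + u.length + 2 := by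
        simp; omega
      have h1 : ((a :: t).map f).sum = 0 := by
        refine ih (a :: t) ?_ _ hloop1
        simp only [List.length_cons]
        rw [len] at hl; omega
      have h2 : ((s ++ a :: u).map f).sum = 0 := by
        refine ih (s ++ a :: u) ?_ _ hloop2
        simp only [List.length_append, List.length_cons]
        rw [len] at hl; omega
      have hsum : ((s ++ a :: (t ++ a :: u)).map f).sum
          = ((a :: t).map f).sum + ((s ++ a :: u).map f).sum := by
        simp only [List.map_append, List.sum_append, List.map_cons, List.sum_cons]
        abel
      rw [hsum, h1, h2, add_zero]

/-- Reversal of a symmetrized edge. -/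
def swp : E ⊕ E → E ⊕ E := Sum.elim Sum.inr Sum.inl

lemma sym_src_swp (G : Dgraph V E) (ee : E ⊕ E) : G.sym.src (swp ee) = G.sym.tgt ee := by
  cases ee <;> rfl

lemma sym_tgt_swp (G : Dgraph V E) (ee : E ⊕ E) : G.sym.tgt (swp ee) = G.sym.src ee := by
  cases ee <;> rfl

lemma ch_reverse (G : Dgraph V E) :
    ∀ {l : List (E ⊕ E)} {x y : V}, Ch G.sym x l y → Ch G.sym y (l.reverse.map swp) x := by
  intro l
  induction l with
  | nil => intro x y h; cases h; exact rfl
  | cons e t ih =>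
    intro x y h
    have h1 : Ch G.sym y (t.reverse.map swp) (G.sym.tgt e) := ih h.2
    have h2 : Ch G.sym (G.sym.tgt e) [swp e] x := by
      refine ⟨sym_src_swp G e, ?_⟩
      show G.sym.tgt (swp e) = x
      rw [sym_tgt_swp]; exact h.1
    have h3 : (e :: t).reverse.map swp = t.reverse.map swp ++ [swp e] := by simp
    rw [h3]; exact ch_append h1 h2

lemma adj_edge (G : Dgraph V E) {x y : V} (h : G.Adj x y) :
    ∃ ee : E ⊕ E, G.sym.src ee = x ∧ G.sym.tgt ee = y := by
  obtain ⟨e, he | he⟩ := h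
  · exact ⟨Sum.inl e, he.1, he.2⟩
  · exact ⟨Sum.inr e, he.2, he.1⟩

lemma reach_walk (G : Dgraph V E) {x y : V} (h : Relation.ReflTransGen G.Adj x y) :
    ∃ l : List (E ⊕ E), Ch G.sym x l y := by
  induction h with
  | refl => exact ⟨[], rfl⟩
  | tail _ hadj ih =>
    obtain ⟨l, hl⟩ := ih
    obtain ⟨ee, h1, h2⟩ := adj_edge G hadj
    exact ⟨l ++ [ee], ch_append hl ⟨h1, h2⟩⟩

lemma sum_rev_neg {A : Type} [AddCommGroup A] (f : E ⊕ E → A)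
    (hf : Dgraph.Antisym A f) (l : List (E ⊕ E)) :
    ((l.reverse.map swp).map f).sum = - (l.map f).sum := by
  have hswp : ∀ ee, f (swp ee) = - f ee := by
    intro ee
    cases ee with
    | inl e => exact hf e
    | inr e => show f (Sum.inl e) = - f (Sum.inr e); rw [hf e, neg_neg]
  rw [List.map_map]
  have h1 : l.reverse.map (f ∘ swp) = l.reverse.map (fun ee => - f ee) :=
    List.map_congr_left (fun ee _ => hswp ee)
  rw [h1, Dgraph.sum_map_neg, neg_inj]
  rw [← List.sum_reverse (l.map f), List.map_reverse]

lemma two_cycle (G : Dgraph V E) (e : E) : G.sym.IsCycle [Sum.inl e, Sum.inr e] := by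
  refine ⟨by simp, ?_, ?_⟩
  · exact List.isChain_pair.mpr rfl
  · intro _; rfl

variable (A : Type) [AddCommGroup A]

open Classical in
/-- Extension by zero at the base vertex. -/
noncomputable def Pfun (v₀ : V) (q : {v : V // v ≠ v₀} → A) : V → A :=
  fun v => if h : v = v₀ then 0 else q ⟨v, h⟩

lemma Pfun_v0 (v₀ : V) (q : {v : V // v ≠ v₀} → A) : Pfun A v₀ q v₀ = 0 := dif_pos rfl

lemma Pfun_ne (v₀ : V) (q : {v : V // v ≠ v₀} → A) (v : V) (h : v ≠ v₀) :
    Pfun A v₀ q v = q ⟨v, h⟩ := dif_neg h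

lemma Pfun_add (v₀ : V) (q q' : {v : V // v ≠ v₀} → A) (v : V) :
    Pfun A v₀ (q + q') v = Pfun A v₀ q v + Pfun A v₀ q' v := by
  unfold Pfun
  split
  · simp
  · simp [Pi.add_apply]

end Stmt2Aux



/-- For a finite weakly connected directed graph whose underlying
undirected graph is not bipartite, the group `WF(V ∪ 𝔼, A)` is isomorphic to
`A₂ × A^(|V| - 1)`, where `A₂` is the subgroup of elements of order dividing 2. -/
theorem stmt2 (V E : Type) [Fintype V] (A : Type) [AddCommGroup A]
    (G : Dgraph V E) (hG : G.WeaklyConnected) (hB : ¬ G.Bipartite) :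
    Nonempty (Dgraph.WF A G ≃+ (Dgraph.Two A × (Fin (Fintype.card V - 1) → A))) := by
  classical
  obtain ⟨e₀⟩ : Nonempty E := by
    by_contra h
    rw [not_nonempty_iff] at h
    exact hB ⟨fun _ => true, fun e => (h.false e).elim⟩
  set v₀ := G.src e₀ with hv₀
  open Stmt2Aux in
  -- the additive hom from the product into pairs of functions
  let Φ : (Dgraph.Two A × ({v : V // v ≠ v₀} → A)) →+ ((V → A) × ((E ⊕ E) → A)) :=
    AddMonoidHom.mk' (fun x => (fun _ => (x.1 : A),
      fun ee => Stmt2Aux.Pfun A v₀ x.2 (G.sym.tgt ee) - Stmt2Aux.Pfun A v₀ x.2 (G.sym.src ee)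
        + (x.1 : A)))
      (by
        intro x y
        refine Prod.ext ?_ ?_
        · funext v
          show ((x.1 + y.1 : Dgraph.Two A) : A) = (x.1 : A) + (y.1 : A)
          rfl
        · funext ee
          show Stmt2Aux.Pfun A v₀ (x.2 + y.2) _ - Stmt2Aux.Pfun A v₀ (x.2 + y.2) _
              + ((x.1 + y.1 : Dgraph.Two A) : A) = _
          rw [Stmt2Aux.Pfun_add, Stmt2Aux.Pfun_add]
          show _ = (Stmt2Aux.Pfun A v₀ x.2 _ - Stmt2Aux.Pfun A v₀ x.2 _ + (x.1 : A))
            + (Stmt2Aux.Pfun A v₀ y.2 _ - Stmt2Aux.Pfun A v₀ y.2 _ + (y.1 : A))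
          push_cast
          abel)
  have hmem : ∀ x, Φ x ∈ Dgraph.WF A G := by
    rintro ⟨a, q⟩
    have ha : (a : A) + (a : A) = 0 := a.2
    constructor
    · -- antisymmetry
      intro e
      show Stmt2Aux.Pfun A v₀ q (G.src e) - Stmt2Aux.Pfun A v₀ q (G.tgt e) + (a : A)
        = -(Stmt2Aux.Pfun A v₀ q (G.tgt e) - Stmt2Aux.Pfun A v₀ q (G.src e) + (a : A))
      have h1 : (a : A) = -(a : A) := eq_neg_of_add_eq_zero_left ha
      have h2 : -(Stmt2Aux.Pfun A v₀ q (G.tgt e) - Stmt2Aux.Pfun A v₀ q (G.src e) + (a : A))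
          = Stmt2Aux.Pfun A v₀ q (G.src e) - Stmt2Aux.Pfun A v₀ q (G.tgt e) + -(a : A) := by abel
      rw [h2]
      exact congrArg (fun t => Stmt2Aux.Pfun A v₀ q (G.src e)
        - Stmt2Aux.Pfun A v₀ q (G.tgt e) + t) h1
    · -- balancedness
      intro l hl
      show (l.map (fun ee => (a : A) + (Stmt2Aux.Pfun A v₀ q (G.sym.tgt ee)
        - Stmt2Aux.Pfun A v₀ q (G.sym.src ee) + (a : A)))).sum = 0
      have hterm : ∀ ee ∈ l, (a : A)
          + (Stmt2Aux.Pfun A v₀ q (G.sym.tgt ee) - Stmt2Aux.Pfun A v₀ q (G.sym.src ee) + (a : A))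
          = Stmt2Aux.Pfun A v₀ q (G.sym.tgt ee) - Stmt2Aux.Pfun A v₀ q (G.sym.src ee) := by
        intro ee _
        rw [show (a:A) + (Stmt2Aux.Pfun A v₀ q (G.sym.tgt ee)
            - Stmt2Aux.Pfun A v₀ q (G.sym.src ee) + (a : A))
          = Stmt2Aux.Pfun A v₀ q (G.sym.tgt ee) - Stmt2Aux.Pfun A v₀ q (G.sym.src ee)
            + ((a:A) + (a:A)) from by abel, ha, add_zero]
      rw [List.map_congr_left hterm]
      rcases eq_or_ne l [] with rfl | hne
      · rfl
      · have hch := Stmt2Aux.ch_of_chain' (H := G.sym) l hne hl.2.1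
        rw [Stmt2Aux.ch_telescope (Stmt2Aux.Pfun A v₀ q) hch, hl.2.2 hne, sub_self]
  let Ψ := Φ.codRestrict (Dgraph.WF A G) hmem
  have hinj : Function.Injective Ψ := by
    rw [injective_iff_map_eq_zero]
    rintro ⟨a, q⟩ hx
    have hx' : Φ (a, q) = 0 := congrArg Subtype.val hx
    have h1 : (a : A) = 0 := congrFun (congrArg Prod.fst hx') v₀
    have h2 : ∀ ee, Stmt2Aux.Pfun A v₀ q (G.sym.tgt ee) - Stmt2Aux.Pfun A v₀ q (G.sym.src ee)
        + (a : A) = 0 := fun ee => congrFun (congrArg Prod.snd hx') ee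
    have h3 : ∀ x y, G.Adj x y → Stmt2Aux.Pfun A v₀ q x = Stmt2Aux.Pfun A v₀ q y := by
      intro x y hadj
      obtain ⟨ee, hs, ht⟩ := Stmt2Aux.adj_edge G hadj
      have h4 := h2 ee
      rw [hs, ht, h1, add_zero, sub_eq_zero] at h4
      exact h4.symm
    have h4 : ∀ v, Stmt2Aux.Pfun A v₀ q v = 0 := by
      intro v
      induction hG v₀ v with
      | refl => exact Stmt2Aux.Pfun_v0 A v₀ q
      | tail _ hadj ih => rw [← h3 _ _ hadj]; exact ih
    have hq : q = 0 := by
      funext v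
      have h5 := h4 v.1
      rwa [Stmt2Aux.Pfun_ne A v₀ q v.1 v.2, Subtype.coe_eta] at h5
    exact Prod.ext (Subtype.ext h1) hq
  have hsurj : Function.Surjective Ψ := by
    rintro ⟨⟨g, f⟩, hanti, hbal⟩
    replace hanti : Dgraph.Antisym A f := hanti
    replace hbal : Dgraph.BalancedVE A G.sym g f := hbal
    -- step 1: along every edge, g (src) + g (tgt) = 0
    have hedge : ∀ e : E, g (G.src e) + g (G.tgt e) = 0 := by
      intro e
      have h0 := hbal [Sum.inl e, Sum.inr e] (Stmt2Aux.two_cycle G e)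
      simp only [List.map_cons, List.map_nil, List.sum_cons, List.sum_nil, add_zero] at h0
      have h1 : g (G.src e) + f (Sum.inl e) + (g (G.tgt e) + f (Sum.inr e)) = 0 := h0
      rw [hanti e] at h1
      rw [show g (G.src e) + g (G.tgt e)
        = g (G.src e) + f (Sum.inl e) + (g (G.tgt e) + -f (Sum.inl e)) from by abel]
      exact h1
    have hadjg : ∀ x y, G.Adj x y → g y = - g x := by
      rintro x y ⟨e, he | he⟩
      · rw [← he.1, ← he.2]
        exact eq_neg_of_add_eq_zero_right (hedge e)
      · rw [← he.1, ← he.2]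
        exact eq_neg_of_add_eq_zero_left (hedge e)
    have hpm : ∀ v, g v = g v₀ ∨ g v = - g v₀ := by
      intro v
      induction hG v₀ v with
      | refl => exact Or.inl rfl
      | tail _ hadj ih =>
        rcases ih with h | h
        · right; rw [hadjg _ _ hadj, h]
        · left; rw [hadjg _ _ hadj, h, neg_neg]
    have h2a : g v₀ + g v₀ = 0 := by
      by_contra hcon
      apply hB
      refine ⟨fun v => decide (g v = g v₀), fun e => ?_⟩
      have hne : g v₀ ≠ - g v₀ := fun h => hcon (add_eq_zero_iff_eq_neg.mpr h)
      have ht : g (G.tgt e) = - g (G.src e) := hadjg _ _ ⟨e, Or.inl ⟨rfl, rfl⟩⟩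
      rcases hpm (G.src e) with h | h
      · have ht' : g (G.tgt e) = - g v₀ := by rw [ht, h]
        have hb1 : decide (g (G.src e) = g v₀) = true := decide_eq_true h
        have hb2 : decide (g (G.tgt e) = g v₀) = false :=
          decide_eq_false (fun hh => hne (hh.symm.trans ht'))
        show decide (g (G.src e) = g v₀) ≠ decide (g (G.tgt e) = g v₀)
        rw [hb1, hb2]; simp
      · have ht' : g (G.tgt e) = g v₀ := by rw [ht, h, neg_neg]
        have hb1 : decide (g (G.src e) = g v₀) = false :=
          decide_eq_false (fun hh => hne (hh.symm.trans h))
        have hb2 : decide (g (G.tgt e) = g v₀) = true := decide_eq_true ht'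
        show decide (g (G.src e) = g v₀) ≠ decide (g (G.tgt e) = g v₀)
        rw [hb1, hb2]; simp
    have hneg : - g v₀ = g v₀ := neg_eq_of_add_eq_zero_left h2a
    have hconst : ∀ v, g v = g v₀ := fun v => (hpm v).elim id (fun h => h.trans hneg)
    -- the shifted edge function
    set f' : (E ⊕ E) → A := fun ee => f ee + g v₀ with hf'def
    have hf'anti : Dgraph.Antisym A f' := by
      intro e
      show f (Sum.inr e) + g v₀ = -(f (Sum.inl e) + g v₀)
      rw [hanti e, neg_add, hneg]
    have hf'cyc : ∀ l, G.sym.IsCycle l → (l.map f').sum = 0 := by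
      intro l hl
      rw [← hbal l hl]
      congr 1
      refine List.map_congr_left (fun ee _ => ?_)
      show f ee + g v₀ = g (G.sym.src ee) + f ee
      rw [hconst (G.sym.src ee), add_comm]
    -- the potential
    have hwalk : ∀ v, ∃ l, Stmt2Aux.Ch G.sym v₀ l v := fun v => Stmt2Aux.reach_walk G (hG v₀ v)
    choose W hW using hwalk
    have hclosed : ∀ (l : List (E ⊕ E)) (x : V), Stmt2Aux.Ch G.sym x l x → (l.map f').sum = 0 :=
      fun l x hc => Stmt2Aux.sum_closed f' hf'cyc l.length l le_rfl x hc
    set p : V → A := fun v => ((W v).map f').sum with hpdef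
    have hp : ∀ v, p v = ((W v).map f').sum := fun v => rfl
    have hp0 : p v₀ = 0 := hclosed (W v₀) v₀ (hW v₀)
    have hkey : ∀ ee, p (G.sym.tgt ee) = p (G.sym.src ee) + f' ee := by
      intro ee
      have hc : Stmt2Aux.Ch G.sym v₀
          (W (G.sym.src ee) ++ ee :: ((W (G.sym.tgt ee)).reverse.map Stmt2Aux.swp)) v₀ :=
        Stmt2Aux.ch_append (hW _) ⟨rfl, Stmt2Aux.ch_reverse G (hW _)⟩
      have h0 := hclosed _ _ hc
      rw [List.map_append, List.sum_append, List.map_cons, List.sum_cons,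
        Stmt2Aux.sum_rev_neg f' hf'anti] at h0
      rw [hp, hp]
      have h1 : ((W (G.sym.src ee)).map f').sum + f' ee - ((W (G.sym.tgt ee)).map f').sum = 0 := by
        rw [← h0]; abel
      have h2 := sub_eq_zero.mp h1
      exact h2.symm
    -- assemble the preimage
    refine ⟨(⟨g v₀, h2a⟩, fun v => p v.1), Subtype.ext ?_⟩
    show Φ (⟨g v₀, h2a⟩, fun v => p v.1) = (g, f)
    have hPf : ∀ v, Stmt2Aux.Pfun A v₀ (fun v : {v : V // v ≠ v₀} => p v.1) v = p v := by
      intro v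
      by_cases h : v = v₀
      · rw [h, Stmt2Aux.Pfun_v0, hp0]
      · rw [Stmt2Aux.Pfun_ne A v₀ _ v h]
    refine Prod.ext ?_ ?_
    · funext v
      exact (hconst v).symm
    · funext ee
      show Stmt2Aux.Pfun A v₀ _ (G.sym.tgt ee) - Stmt2Aux.Pfun A v₀ _ (G.sym.src ee) + g v₀ = f ee
      rw [hPf, hPf, hkey ee]
      have hfe : f' ee = f ee + g v₀ := rfl
      rw [hfe]
      rw [show p (G.sym.src ee) + (f ee + g v₀) - p (G.sym.src ee) + g v₀
        = f ee + (g v₀ + g v₀) from by abel, h2a, add_zero]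
  have he1 : (Dgraph.Two A × ({v : V // v ≠ v₀} → A)) ≃+ Dgraph.WF A G :=
    AddEquiv.ofBijective Ψ ⟨hinj, hsurj⟩
  have hcard : Fintype.card {v : V // v ≠ v₀} = Fintype.card V - 1 := by
    have := Fintype.card_subtype_compl (fun v : V => v = v₀)
    rw [Fintype.card_subtype_eq] at this
    exact this
  let e2 : {v : V // v ≠ v₀} ≃ Fin (Fintype.card V - 1) := Fintype.equivFinOfCardEq hcard
  let e3 : ({v : V // v ≠ v₀} → A) ≃+ (Fin (Fintype.card V - 1) → A) :=
    { Equiv.arrowCongr e2 (Equiv.refl A) with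
      map_add' := fun _ _ => rfl }
  exact ⟨he1.symm.trans (AddEquiv.prodCongr (AddEquiv.refl _) e3)⟩
end

section
/- Let G = (V, E) be a weakly connected directed graph whose underlying undirected graph is not bipartite, and A an Abelian group. Then the group of balanceable functions g : V → A in the flexible sense is isomorphic to A₂, the subgroup of elements of A of order dividing 2. -/
namespace Dgraph

variable {V E : Type} {A : Type} [AddCommGroup A]

lemma two_cycle (G : Dgraph V E) (e : E) :
    G.sym.IsCycle [Sum.inl e, Sum.inr e] := by
  refine ⟨by simp, by simp [sym, List.Chain'], fun h => by simp [sym]⟩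

lemma edge_rel {G : Dgraph V E} {g : V → A} {f : (E ⊕ E) → A}
    (hf : Antisym A f) (hb : BalancedVE A G.sym g f) (e : E) :
    g (G.src e) + g (G.tgt e) = 0 := by
  have h := hb [Sum.inl e, Sum.inr e] (two_cycle G e)
  simp only [List.map_cons, List.map_nil, List.sum_cons, List.sum_nil, add_zero,
    sym, Sum.elim_inl, Sum.elim_inr, hf e] at h
  calc g (G.src e) + g (G.tgt e)
      = g (G.src e) + f (Sum.inl e) + (g (G.tgt e) + -f (Sum.inl e)) := by abel
    _ = 0 := h

lemma adj_rel {G : Dgraph V E} {g : V → A}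
    (hrel : ∀ e, g (G.src e) + g (G.tgt e) = 0) {x y : V} (h : G.Adj x y) :
    g y = - g x := by
  obtain ⟨e, he | he⟩ := h
  · rw [← he.1, ← he.2]; have := hrel e; linear_combination (norm := abel) this
  · rw [← he.1, ← he.2]; have := hrel e; linear_combination (norm := abel) this

lemma reach_cases {G : Dgraph V E} {g : V → A}
    (hrel : ∀ e, g (G.src e) + g (G.tgt e) = 0) {x y : V}
    (h : Relation.ReflTransGen G.Adj x y) :
    g y = g x ∨ g y = - g x := by
  induction h with
  | refl => exact Or.inl rfl
  | tail _ hadj ih =>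
      rcases ih with h' | h'
      · right; rw [adj_rel hrel hadj, h']
      · left; rw [adj_rel hrel hadj, h', neg_neg]

lemma bf_struct {G : Dgraph V E} (hG : G.WeaklyConnected) (hB : ¬ G.Bipartite)
    {g : V → A} (hg : g ∈ BF A G) :
    (∀ v, g v + g v = 0) ∧ (∀ v w, g v = g w) := by
  obtain ⟨f, hf, hb⟩ := hg
  have hrel : ∀ e, g (G.src e) + g (G.tgt e) = 0 := edge_rel hf hb
  have h2 : ∀ v, g v + g v = 0 := by
    by_contra hcon
    push_neg at hcon
    obtain ⟨v, hv⟩ := hcon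
    apply hB
    classical
    refine ⟨fun w => decide (g w = g v), fun e => ?_⟩
    have hs := reach_cases hrel (hG v (G.src e))
    have ht : g (G.tgt e) = - g (G.src e) := by
      have := hrel e; linear_combination (norm := abel) this
    rcases hs with h' | h'
    · have htv : g (G.tgt e) ≠ g v := by
        rw [ht, h']; intro hc
        exact hv (neg_eq_iff_add_eq_zero.mp hc)
      show decide (g (G.src e) = g v) ≠ decide (g (G.tgt e) = g v)
      rw [decide_eq_true h', decide_eq_false htv]; simp
    · have hsv : g (G.src e) ≠ g v := by
        rw [h']; intro hc
        exact hv (neg_eq_iff_add_eq_zero.mp hc)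
      have htv : g (G.tgt e) = g v := by rw [ht, h', neg_neg]
      show decide (g (G.src e) = g v) ≠ decide (g (G.tgt e) = g v)
      rw [decide_eq_false hsv, decide_eq_true htv]; simp
  refine ⟨h2, fun v w => ?_⟩
  rcases reach_cases hrel (hG v w) with h' | h'
  · exact h'.symm
  · rw [h']
    exact (neg_eq_iff_add_eq_zero.mpr (h2 v)).symm

lemma const_mem_bf (G : Dgraph V E) {a : A} (ha : a + a = 0) :
    (fun _ : V => a) ∈ BF A G := by
  have hna : -a = a := neg_eq_iff_add_eq_zero.mpr ha
  refine ⟨fun _ => a, fun e => hna.symm, fun l hl => ?_⟩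
  exact sum_map_eq_zero l _ (fun e => ha)

end Dgraph

/-- For a weakly connected directed graph whose underlying undirected
graph is not bipartite, the group `BF(V, A)` of flexible-balanceable functions on vertices
is isomorphic to `A₂`, the subgroup of elements of order dividing 2. -/
theorem stmt6 (V E : Type) (A : Type) [AddCommGroup A]
    (G : Dgraph V E) (hG : G.WeaklyConnected) (hB : ¬ G.Bipartite) :
    Nonempty (Dgraph.BF A G ≃+ Dgraph.Two A) := by
  have hE : Nonempty E := by
    by_contra h
    rw [not_nonempty_iff] at h
    exact hB ⟨fun _ => true, fun e => (h.false e).elim⟩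
  obtain ⟨e₀⟩ := hE
  set v₀ := G.src e₀ with hv₀
  refine ⟨{ toFun := fun g => ⟨g.1 v₀, (Dgraph.bf_struct hG hB g.2).1 v₀⟩,
            invFun := fun a => ⟨fun _ => a.1, Dgraph.const_mem_bf G a.2⟩,
            left_inv := ?_, right_inv := ?_, map_add' := ?_ }⟩
  · intro g
    ext v
    exact ((Dgraph.bf_struct hG hB g.2).2 v v₀).symm
  · intro a; rfl
  · intro g h; rfl
end

section
/- In the flexible setting, the quotient of the group of balanced functions on vertices and edges, WF(V ∪ 𝔼, A), by the subgroup HF(𝔼, A) of balanced functions on edges (extended by zero on vertices), is naturally isomorphic to the group BF(V, A) of balanceable functions on vertices, via restriction to V. -/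
/-- The quotient of `WF(V ∪ 𝔼, A)` by the subgroup `HF(𝔼, A)` (embedded
as balanced functions vanishing on all vertices) is naturally isomorphic to `BF(V, A)`,
the isomorphism being induced by restriction to the vertices. -/
theorem stmt7 (V E : Type) (A : Type) [AddCommGroup A]
    (G : Dgraph V E) (hG : G.WeaklyConnected) :
    ∃ φ : (Dgraph.WF A G ⧸
        ((AddSubgroup.prod (⊥ : AddSubgroup (V → A)) (Dgraph.HF A G)).addSubgroupOf
          (Dgraph.WF A G))) ≃+ Dgraph.BF A G,
      ∀ p : Dgraph.WF A G,
        ((φ (QuotientAddGroup.mk p) : Dgraph.BF A G) : V → A) = (p : (V → A) × ((E ⊕ E) → A)).1 := by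
  classical
  -- the restriction homomorphism
  let φ₀ : Dgraph.WF A G →+ Dgraph.BF A G :=
    { toFun := fun p => ⟨(p : (V → A) × ((E ⊕ E) → A)).1, ⟨(p : (V → A) × ((E ⊕ E) → A)).2, p.2⟩⟩
      map_zero' := rfl
      map_add' := fun p q => rfl }
  have hsurj : Function.Surjective φ₀ := by
    rintro ⟨g, f, hf⟩
    exact ⟨⟨(g, f), hf⟩, rfl⟩
  have hker : ((AddSubgroup.prod (⊥ : AddSubgroup (V → A)) (Dgraph.HF A G)).addSubgroupOf
      (Dgraph.WF A G)) = φ₀.ker := by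
    ext p
    obtain ⟨⟨g, f⟩, hgf⟩ := p
    constructor
    · rintro ⟨hg, -⟩
      exact Subtype.ext (AddSubgroup.mem_bot.mp hg)
    · intro hp
      have hg : g = 0 := congrArg (fun x => ((x : Dgraph.BF A G) : V → A)) hp
      subst hg
      refine ⟨AddSubgroup.mem_bot.mpr rfl, ?_⟩
      refine ⟨hgf.1, fun l hl => ?_⟩
      have := hgf.2 l hl
      simpa using this
  refine ⟨(QuotientAddGroup.quotientAddEquivOfEq hker).trans
    (QuotientAddGroup.quotientKerEquivOfSurjective φ₀ hsurj), fun p => ?_⟩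
  rfl
end

section
/- Let G = (V, E) be a strongly connected directed graph and A an Abelian group. Then the group HR(E, A) of rigid-balanced functions f : E → A (sum of values along every directed cycle with distinct edges is zero) is isomorphic to A^(|V|-1). -/
namespace Dgraph

variable {V E : Type} {A : Type} [AddCommGroup A]

/-- Walk predicate: `Wk G x l y` means `l` is a directed walk from `x` to `y`. -/
def Wk (G : Dgraph V E) : V → List E → V → Prop
  | x, [], y => x = y
  | x, e :: l, y => G.src e = x ∧ Wk G (G.tgt e) l y

variable {G : Dgraph V E}

lemma wk_append {x y z : V} {l m : List E} (h1 : G.Wk x l y) (h2 : G.Wk y m z) :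
    G.Wk x (l ++ m) z := by
  induction l generalizing x with
  | nil => simp only [Wk] at h1; subst h1; simpa using h2
  | cons e t ih =>
    simp only [Wk] at h1 ⊢
    exact ⟨h1.1, ih h1.2⟩

lemma wk_append_iff {x z : V} {l m : List E} :
    G.Wk x (l ++ m) z ↔ ∃ y, G.Wk x l y ∧ G.Wk y m z := by
  constructor
  · intro h
    induction l generalizing x with
    | nil => exact ⟨x, rfl, h⟩
    | cons e t ih =>
      simp only [List.cons_append, Wk] at h
      obtain ⟨y, hy1, hy2⟩ := ih h.2
      exact ⟨y, ⟨h.1, hy1⟩, hy2⟩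
  · rintro ⟨y, h1, h2⟩; exact wk_append h1 h2

lemma wk_chain' {x y : V} {l : List E} (h : G.Wk x l y) :
    l.Chain' (fun a b => G.tgt a = G.src b) := by
  induction l generalizing x with
  | nil => exact List.isChain_nil
  | cons e t ih =>
    simp only [Wk] at h
    refine List.isChain_cons.mpr ?_
    refine ⟨?_, ih h.2⟩
    intro b hb
    cases t with
    | nil => simp at hb
    | cons e' t' =>
      simp only [List.head?_cons, Option.mem_def, Option.some.injEq] at hb
      subst hb
      exact (h.2.1).symm

lemma wk_head {x y : V} {l : List E} (h : G.Wk x l y) (hne : l ≠ []) :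
    G.src (l.head hne) = x := by
  cases l with
  | nil => exact absurd rfl hne
  | cons e t => exact h.1

lemma wk_last {x y : V} {l : List E} (h : G.Wk x l y) (hne : l ≠ []) :
    G.tgt (l.getLast hne) = y := by
  induction l generalizing x with
  | nil => exact absurd rfl hne
  | cons e t ih =>
    simp only [Wk] at h
    cases t with
    | nil => simpa [Wk] using h.2
    | cons e' t' =>
      rw [List.getLast_cons (by simp)]
      exact ih h.2 (by simp)

lemma wk_of_chain' {l : List E} (hne : l ≠ []) (hc : l.Chain' (fun a b => G.tgt a = G.src b)) :
    G.Wk (G.src (l.head hne)) l (G.tgt (l.getLast hne)) := by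
  induction l with
  | nil => exact absurd rfl hne
  | cons e t ih =>
    cases t with
    | nil => exact ⟨rfl, rfl⟩
    | cons e' t' =>
      have hc' : (e' :: t').Chain' (fun a b => G.tgt a = G.src b) := hc.tail
      have hee' : G.tgt e = G.src e' := by
        exact (List.isChain_cons_cons.1 hc).1
      refine ⟨rfl, ?_⟩
      have := ih (by simp) hc'
      rw [List.getLast_cons (l := e' :: t') (by simp)]
      simp only [List.head_cons] at this
      rwa [← hee'] at this

lemma cycle_of_wk {x : V} {l : List E} (h : G.Wk x l x) (hnd : l.Nodup) :
    G.IsCycle l := by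
  refine ⟨hnd, wk_chain' h, fun hne => ?_⟩
  rw [wk_last h hne, wk_head h hne]

lemma wk_of_cycle {l : List E} (h : G.IsCycle l) (hne : l ≠ []) :
    G.Wk (G.src (l.head hne)) l (G.src (l.head hne)) := by
  have := wk_of_chain' hne h.2.1
  rwa [h.2.2 hne] at this

lemma exists_dup_split {l : List E} (h : ¬ l.Nodup) :
    ∃ (e : E) (a b c : List E), l = a ++ e :: (b ++ e :: c) := by
  induction l with
  | nil => exact absurd List.nodup_nil h
  | cons x t ih =>
    rw [List.nodup_cons] at h
    push_neg at h
    by_cases hx : x ∈ t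
    · obtain ⟨b, c, rfl⟩ := List.append_of_mem hx
      exact ⟨x, [], b, c, rfl⟩
    · obtain ⟨e, a, b, c, rfl⟩ := ih (h hx)
      exact ⟨e, x :: a, b, c, rfl⟩

lemma closed_wk_sum (f : E → A) (hf : G.BalancedE A f) :
    ∀ (n : ℕ) (l : List E) (x : V), l.length ≤ n → G.Wk x l x → (l.map f).sum = 0 := by
  intro n
  induction n with
  | zero =>
    intro l x hlen _
    interval_cases h : l.length
    · rw [List.length_eq_zero_iff] at h; subst h; simp
  | succ n ih =>
    intro l x hlen hw
    by_cases hnd : l.Nodup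
    · exact hf l (cycle_of_wk hw hnd)
    · obtain ⟨e, a, b, c, rfl⟩ := exists_dup_split hnd
      obtain ⟨y1, ha, h2⟩ := wk_append_iff.1 hw
      obtain ⟨hsrc1, h3⟩ := h2
      obtain ⟨y2, hb, h4⟩ := wk_append_iff.1 h3
      obtain ⟨hsrc2, hc⟩ := h4
      have inner : G.Wk (G.src e) (e :: b) (G.src e) := ⟨rfl, hsrc2 ▸ hb⟩
      have outer : G.Wk x (a ++ e :: c) x := wk_append ha ⟨hsrc1, hc⟩
      have len_total : a.length + (b.length + (c.length + 2)) ≤ n + 1 := by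
        simpa [List.length_append, Nat.add_comm, Nat.add_left_comm] using hlen
      have hinner := ih (e :: b) (G.src e) (by simp; omega) inner
      have houter := ih (a ++ e :: c) x (by simp [List.length_append]; omega) outer
      have hsplit : ((a ++ e :: (b ++ e :: c)).map f).sum
          = ((e :: b).map f).sum + ((a ++ e :: c).map f).sum := by
        simp only [List.map_append, List.sum_append, List.map_cons, List.sum_cons]
        abel
      rw [hsplit, hinner, houter, add_zero]

lemma reach_wk {x y : V} (h : G.Reach x y) : ∃ l, G.Wk x l y := by
  induction h with
  | refl => exact ⟨[], rfl⟩
  | tail _ hstep ih =>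
    obtain ⟨l, hl⟩ := ih
    obtain ⟨e, he1, he2⟩ := hstep
    exact ⟨l ++ [e], wk_append hl ⟨he1, he2⟩⟩

lemma sum_eq_of_wk (f : E → A) (hf : G.BalancedE A f) (hG : G.StronglyConnected)
    {x y : V} {p q : List E} (hp : G.Wk x p y) (hq : G.Wk x q y) :
    (p.map f).sum = (q.map f).sum := by
  obtain ⟨r, hr⟩ := reach_wk (hG y x)
  have h1 := closed_wk_sum f hf (p ++ r).length (p ++ r) x le_rfl (wk_append hp hr)
  have h2 := closed_wk_sum f hf (q ++ r).length (q ++ r) x le_rfl (wk_append hq hr)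
  simp only [List.map_append, List.sum_append] at h1 h2
  have := h1.trans h2.symm
  exact add_right_cancel this

lemma wk_telescope (g : V → A) {x y : V} {l : List E} (h : G.Wk x l y) :
    (l.map (fun e => g (G.tgt e) - g (G.src e))).sum = g y - g x := by
  induction l generalizing x with
  | nil => simp only [Wk] at h; subst h; simp
  | cons e t ih =>
    obtain ⟨h1, h2⟩ := h
    simp only [List.map_cons, List.sum_cons, ih h2, h1]
    abel

end Dgraph



/-- For a finite strongly connected directed graph `G = (V, E)`, the
group `HR(E, A)` of rigid-balanced functions on edges is isomorphic to `A^(|V| - 1)`. -/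
theorem stmt9 (V E : Type) [Fintype V] (A : Type) [AddCommGroup A]
    (G : Dgraph V E) (hG : G.StronglyConnected) :
    Nonempty (Dgraph.HR A G ≃+ (Fin (Fintype.card V - 1) → A)) := by
  classical
  cases isEmpty_or_nonempty V with
  | inl hV =>
    haveI : IsEmpty E := ⟨fun e => hV.false (G.src e)⟩
    haveI : IsEmpty (Fin (Fintype.card V - 1)) := by
      have h0 : Fintype.card V = 0 := Fintype.card_eq_zero
      exact ⟨fun i => absurd i.isLt (by omega)⟩
    refine ⟨{ toFun := fun _ => 0
              invFun := fun _ => 0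
              left_inv := fun f => Subsingleton.elim _ _
              right_inv := fun k => Subsingleton.elim _ _
              map_add' := fun _ _ => Subsingleton.elim _ _ }⟩
  | inr hV =>
    obtain ⟨v₀⟩ := hV
    choose w hw using fun v => Dgraph.reach_wk (hG v₀ v)
    have hcard : Fintype.card {u : V // u ≠ v₀} = Fintype.card V - 1 := by
      simp [Fintype.card_subtype_eq]
    let Θ : Dgraph.HR A G →+ ({u : V // u ≠ v₀} → A) :=
      { toFun := fun f u => ((w u.1).map f.1).sum
        map_zero' := by
          funext u
          exact Dgraph.sum_map_eq_zero _ _ (fun e => rfl)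
        map_add' := by
          intro f g
          funext u
          show ((w u.1).map ((f + g : Dgraph.HR A G) : E → A)).sum
              = ((w u.1).map (f : E → A)).sum + ((w u.1).map (g : E → A)).sum
          have hmap : (w u.1).map ((f + g : Dgraph.HR A G) : E → A)
              = (w u.1).map (fun e => (f : E → A) e + (g : E → A) e) := rfl
          rw [hmap, Dgraph.sum_map_add] }
    have hbal : ∀ f : Dgraph.HR A G, G.BalancedE A (f : E → A) := fun f => f.2
    have hpot : ∀ (f : Dgraph.HR A G) (e : E),
        ((w (G.tgt e)).map (f : E → A)).sum = ((w (G.src e)).map (f : E → A)).sum + (f : E → A) e := by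
      intro f e
      have h1 : G.Wk v₀ (w (G.src e) ++ [e]) (G.tgt e) :=
        Dgraph.wk_append (hw _) ⟨rfl, rfl⟩
      have h2 := Dgraph.sum_eq_of_wk (f : E → A) (hbal f) hG (hw (G.tgt e)) h1
      simpa using h2
    have hinj : Function.Injective Θ := by
      rw [injective_iff_map_eq_zero]
      intro f hf0
      have hg : ∀ v, ((w v).map (f : E → A)).sum = 0 := by
        intro v
        by_cases hv : v = v₀
        · rw [hv]
          exact Dgraph.closed_wk_sum (f : E → A) (hbal f) _ _ v₀ le_rfl (hw v₀)
        · exact congrFun hf0 ⟨v, hv⟩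
      have hz : ∀ e, (f : E → A) e = 0 := by
        intro e
        have := hpot f e
        rw [hg, hg] at this
        simpa using this.symm
      exact Subtype.ext (funext hz)
    have hsurj : Function.Surjective Θ := by
      intro h
      set g : V → A := fun v => if hv : v = v₀ then 0 else h ⟨v, hv⟩ with hgdef
      have hmem : (fun e => g (G.tgt e) - g (G.src e)) ∈ Dgraph.HR A G := by
        intro l hl
        rcases eq_or_ne l [] with rfl | hne
        · simp
        · have hwk := Dgraph.wk_of_cycle hl hne
          have := Dgraph.wk_telescope g hwk
          rw [this]
          simp
      refine ⟨⟨_, hmem⟩, ?_⟩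
      funext u
      show ((w u.1).map (fun e => g (G.tgt e) - g (G.src e))).sum = h u
      rw [Dgraph.wk_telescope g (hw u.1)]
      have hg0 : g v₀ = 0 := by simp [hgdef]
      have hgu : g u.1 = h u := by
        simp only [hgdef, dif_neg u.2]
      rw [hg0, hgu, sub_zero]
    let ι : {u : V // u ≠ v₀} ≃ Fin (Fintype.card V - 1) :=
      Fintype.equivFinOfCardEq hcard
    let e2 : ({u : V // u ≠ v₀} → A) ≃+ (Fin (Fintype.card V - 1) → A) :=
      { toFun := fun h i => h (ι.symm i)
        invFun := fun k u => k (ι u)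
        left_inv := fun h => funext fun u => by simp
        right_inv := fun k => funext fun i => by simp
        map_add' := fun _ _ => rfl }
    exact ⟨(AddEquiv.ofBijective Θ ⟨hinj, hsurj⟩).trans e2⟩
end

section
/- Let G = (V, E) be a weakly connected directed graph with k̄(G) strongly connected components and r(G) edges joining vertices in distinct strongly connected components. Then the group HR(E, A) of rigid-balanced functions on edges is isomorphic to A^(|V| - k̄(G) + r(G)). -/
namespace Dgraph

variable {V E : Type} {A : Type} [AddCommGroup A]

/-- A directed walk (edges may repeat) from `x` to `y`. -/
inductive IsWalk (G : Dgraph V E) : V → V → List E → Prop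
  | nil (x : V) : IsWalk G x x []
  | cons {y z : V} {l : List E} (e : E) (h : G.tgt e = y) (hw : IsWalk G y z l) :
      IsWalk G (G.src e) z (e :: l)

namespace IsWalk

lemma append {G : Dgraph V E} {x y z : V} {l1 l2 : List E}
    (h1 : G.IsWalk x y l1) (h2 : G.IsWalk y z l2) : G.IsWalk x z (l1 ++ l2) := by
  induction h1 with
  | nil => exact h2
  | cons e he hw ih => exact .cons e he (ih h2)

lemma reach {G : Dgraph V E} {x y : V} {l : List E} (h : G.IsWalk x y l) : G.Reach x y := by
  induction h with
  | nil => exact .refl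
  | cons e he hw ih => exact Relation.ReflTransGen.head ⟨e, rfl, he⟩ ih

lemma split {G : Dgraph V E} {x z : V} {l1 l2 : List E} (h : G.IsWalk x z (l1 ++ l2)) :
    ∃ y, G.IsWalk x y l1 ∧ G.IsWalk y z l2 := by
  induction l1 generalizing x with
  | nil => exact ⟨x, .nil x, h⟩
  | cons e t ih =>
    cases h with
    | cons _ he hw =>
      obtain ⟨y, h1, h2⟩ := ih hw
      exact ⟨y, .cons e he h1, h2⟩

lemma chain' {G : Dgraph V E} {x y : V} {l : List E} (h : G.IsWalk x y l) :
    l.Chain' (fun a b => G.tgt a = G.src b) := by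
  induction h with
  | nil => exact List.isChain_nil
  | cons e he hw ih =>
    cases hw with
    | nil => exact List.isChain_singleton _
    | cons e' he' hw' =>
      exact List.isChain_cons_cons.mpr ⟨he, ih⟩

lemma ends {G : Dgraph V E} {x y : V} {l : List E} (h : G.IsWalk x y l) (hne : l ≠ []) :
    G.src (l.head hne) = x ∧ G.tgt (l.getLast hne) = y := by
  induction h with
  | nil => exact absurd rfl hne
  | cons e he hw ih =>
    cases hw with
    | nil => simpa using he
    | cons e' he' hw' =>
      refine ⟨rfl, ?_⟩
      rw [List.getLast_cons (List.cons_ne_nil e' _)]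
      exact (ih (List.cons_ne_nil e' _)).2

end IsWalk

lemma reach_iff_walk {G : Dgraph V E} {x y : V} (h : G.Reach x y) :
    ∃ l, G.IsWalk x y l := by
  induction h with
  | refl => exact ⟨[], .nil x⟩
  | tail hab hbc ih =>
    obtain ⟨l, hl⟩ := ih
    obtain ⟨e, hes, het⟩ := hbc
    refine ⟨l ++ [e], hl.append ?_⟩
    rw [← hes]
    exact .cons e het (.nil _)

lemma walk_of_chain {G : Dgraph V E} {l : List E}
    (hc : l.Chain' (fun a b => G.tgt a = G.src b)) (hne : l ≠ []) :
    G.IsWalk (G.src (l.head hne)) (G.tgt (l.getLast hne)) l := by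
  induction l with
  | nil => exact absurd rfl hne
  | cons e t ih =>
    cases t with
    | nil => exact .cons e rfl (.nil _)
    | cons e' t' =>
      have hc' := List.isChain_cons_cons.mp hc
      have hne' : e' :: t' ≠ [] := List.cons_ne_nil _ _
      have hw' : G.IsWalk (G.src e') (G.tgt ((e' :: t').getLast hne')) (e' :: t') := by
        simpa using ih hc'.2 hne'
      rw [List.getLast_cons hne']
      exact .cons e hc'.1 hw' 

lemma isCycle_walk {G : Dgraph V E} {l : List E} (hc : G.IsCycle l) (hne : l ≠ []) :
    G.IsWalk (G.src (l.head hne)) (G.src (l.head hne)) l := by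
  have := walk_of_chain hc.2.1 hne
  rwa [hc.2.2 hne] at this

lemma not_nodup_decomp {α : Type*} {l : List α} (h : ¬ l.Nodup) :
    ∃ (l1 : List α) (a : α) (l2 l3 : List α), l = l1 ++ a :: (l2 ++ a :: l3) := by
  induction l with
  | nil => exact absurd List.nodup_nil h
  | cons a t ih =>
    by_cases ha : a ∈ t
    · obtain ⟨s, u, rfl⟩ := List.append_of_mem ha
      exact ⟨[], a, s, u, rfl⟩
    · have ht : ¬ t.Nodup := fun hn => h (List.nodup_cons.mpr ⟨ha, hn⟩)
      obtain ⟨l1, b, l2, l3, rfl⟩ := ih ht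
      exact ⟨a :: l1, b, l2, l3, rfl⟩

lemma sum_closed_walk {G : Dgraph V E} {f : E → A} (hf : BalancedE A G f) :
    ∀ (n : ℕ) {x : V} {l : List E}, l.length ≤ n → G.IsWalk x x l → (l.map f).sum = 0 := by
  intro n
  induction n with
  | zero =>
    intro x l hl hw
    have : l = [] := List.eq_nil_of_length_eq_zero (Nat.le_zero.mp hl)
    subst this; simp
  | succ n ih =>
    intro x l hl hw
    by_cases hnd : l.Nodup
    · rcases eq_or_ne l [] with rfl | hne
      · simp
      · have hends := hw.ends hne
        refine hf l ⟨hnd, hw.chain', fun h => ?_⟩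
        rw [hends.2, hends.1]
    · obtain ⟨l1, a, l2, l3, rfl⟩ := not_nodup_decomp hnd
      obtain ⟨y1, w1, w2⟩ := hw.split
      cases w2 with
      | cons _ he w2' =>
        obtain ⟨y2, w3, w4⟩ := w2'.split
        cases w4 with
        | cons _ he' w5 =>
          -- w3 : IsWalk y l2 y2 with y2 = src a, tgt a = y
          have c1 : G.IsWalk (G.src a) (G.src a) (a :: l2) := .cons a he w3
          have c2 : G.IsWalk x x (l1 ++ a :: l3) := w1.append (.cons a he' w5)
          have len : (l1 ++ a :: (l2 ++ a :: l3)).length = l1.length + l2.length + l3.length + 2 := by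
            simp; omega
          have h1 : ((a :: l2).map f).sum = 0 := by
            refine ih ?_ c1
            simp only [List.length_cons]
            rw [len] at hl; omega
          have h2 : ((l1 ++ a :: l3).map f).sum = 0 := by
            refine ih ?_ c2
            simp only [List.length_append, List.length_cons]
            rw [len] at hl; omega
          have expand : ((l1 ++ a :: (l2 ++ a :: l3)).map f).sum
              = ((a :: l2).map f).sum + ((l1 ++ a :: l3).map f).sum := by
            simp only [List.map_append, List.map_cons, List.sum_append, List.sum_cons]
            abel
          rw [expand, h1, h2, add_zero]

lemma walk_sum_eq {G : Dgraph V E} {f : E → A} (hf : BalancedE A G f)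
    {x y : V} {l l' : List E} (h : G.IsWalk x y l) (h' : G.IsWalk x y l')
    (hr : G.Reach y x) : (l.map f).sum = (l'.map f).sum := by
  obtain ⟨m, hm⟩ := reach_iff_walk hr
  have key : ∀ {l0 : List E}, G.IsWalk x y l0 → (l0.map f).sum + (m.map f).sum = 0 := by
    intro l0 h0
    have := sum_closed_walk hf (l0 ++ m).length le_rfl (h0.append hm)
    simpa [List.map_append, List.sum_append] using this
  have k1 := key h
  have k2 := key h'
  have : (l.map f).sum + (m.map f).sum = (l'.map f).sum + (m.map f).sum := by rw [k1, k2]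
  exact add_right_cancel this

lemma walk_edge_intra {G : Dgraph V E} {x y : V} {l : List E}
    (h : G.IsWalk x y l) (hxy : G.Reach y x) {e : E} (he : e ∈ l) :
    G.scSetoid.r (G.src e) (G.tgt e) := by
  obtain ⟨l1, l2, rfl⟩ := List.append_of_mem he
  obtain ⟨y1, w1, w2⟩ := h.split
  cases w2 with
  | cons _ het w3 =>
    refine ⟨Relation.ReflTransGen.single ⟨e, rfl, rfl⟩, ?_⟩
    have r1 : G.Reach (G.tgt e) y := het ▸ w3.reach
    have r2 : G.Reach x (G.src e) := w1.reach
    exact (r1.trans hxy).trans r2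

lemma telescope {G : Dgraph V E} {g : V → A} {f : E → A} {x y : V} {l : List E}
    (h : G.IsWalk x y l) (hl : ∀ e ∈ l, f e = g (G.tgt e) - g (G.src e)) :
    (l.map f).sum = g y - g x := by
  induction h with
  | nil => simp
  | cons e he hw ih =>
    have h1 : f e = g (G.tgt e) - g (G.src e) := hl e List.mem_cons_self
    have h2 := ih (fun e' he' => hl e' (List.mem_cons_of_mem _ he'))
    simp only [List.map_cons, List.sum_cons, h1, h2, he]
    abel

end Dgraph

namespace Dgraph

variable {V E : Type} {A : Type} [AddCommGroup A]

/-- The chosen basepoint of the strongly connected component of `v`. -/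
noncomputable def bp (G : Dgraph V E) (v : V) : V := (Quotient.mk G.scSetoid v).out

lemma bp_rel (G : Dgraph V E) (v : V) : G.scSetoid.r (G.bp v) v :=
  Quotient.exact (Quotient.out_eq (Quotient.mk G.scSetoid v))

lemma bp_bp (G : Dgraph V E) (v : V) : G.bp (G.bp v) = G.bp v := by
  unfold bp
  rw [Quotient.out_eq]

lemma bp_eq_of_rel (G : Dgraph V E) {v w : V} (h : G.scSetoid.r v w) : G.bp v = G.bp w := by
  unfold bp
  rw [Quotient.sound h]

/-- A chosen directed walk from the basepoint of `v`'s component to `v`. -/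
noncomputable def walkTo (G : Dgraph V E) (v : V) : List E :=
  (reach_iff_walk (G.bp_rel v).1).choose

lemma walkTo_spec (G : Dgraph V E) (v : V) : G.IsWalk (G.bp v) v (G.walkTo v) :=
  (reach_iff_walk (G.bp_rel v).1).choose_spec

/-- The potential of `f` at `v`: the sum of `f` along the chosen walk. -/
noncomputable def gf (G : Dgraph V E) (f : E → A) (v : V) : A := ((G.walkTo v).map f).sum

lemma gf_bp (G : Dgraph V E) {f : E → A} (hf : BalancedE A G f) {v : V} (hv : G.bp v = v) :
    G.gf f v = 0 := by
  have hw := G.walkTo_spec v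
  rw [hv] at hw
  exact sum_closed_walk hf (G.walkTo v).length le_rfl hw

lemma gf_edge (G : Dgraph V E) {f : E → A} (hf : BalancedE A G f) {e : E}
    (he : G.scSetoid.r (G.src e) (G.tgt e)) :
    G.gf f (G.tgt e) = G.gf f (G.src e) + f e := by
  have hbp : G.bp (G.src e) = G.bp (G.tgt e) := G.bp_eq_of_rel he
  have w1 : G.IsWalk (G.bp (G.tgt e)) (G.tgt e) (G.walkTo (G.src e) ++ [e]) := by
    have := (G.walkTo_spec (G.src e)).append (.cons e rfl (.nil (G.tgt e)))
    rwa [hbp] at this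
  have := walk_sum_eq hf (G.walkTo_spec (G.tgt e)) w1 (G.bp_rel (G.tgt e)).2
  simpa [gf, List.sum_append] using this

lemma walkTo_intra (G : Dgraph V E) (v : V) {e : E} (he : e ∈ G.walkTo v) :
    G.scSetoid.r (G.src e) (G.tgt e) :=
  walk_edge_intra (G.walkTo_spec v) (G.bp_rel v).2 he

/-- The index type for the isomorphism: non-basepoint vertices plus cross edges. -/
def Idx (G : Dgraph V E) : Type :=
  {v : V // v ≠ G.bp v} ⊕ {e : E // ¬ G.scSetoid.r (G.src e) (G.tgt e)}

section
open Classical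

/-- Extend an index function to a function on all vertices, zero at basepoints. -/
noncomputable def gg (G : Dgraph V E) (a : G.Idx → A) (v : V) : A :=
  if h : v ≠ G.bp v then a (Sum.inl ⟨v, h⟩) else 0

/-- The candidate balanced function built from an index function. -/
noncomputable def psiFun (G : Dgraph V E) (a : G.Idx → A) (e : E) : A :=
  if h : G.scSetoid.r (G.src e) (G.tgt e) then G.gg a (G.tgt e) - G.gg a (G.src e)
  else a (Sum.inr ⟨e, h⟩)

end

/-- The forward map of the isomorphism. -/
noncomputable def phiFun (G : Dgraph V E) (f : E → A) : G.Idx → A :=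
  fun s => Sum.rec (fun v => G.gf f v.1) (fun e => f e.1) s

lemma psi_balanced (G : Dgraph V E) (a : G.Idx → A) : BalancedE A G (G.psiFun a) := by
  intro l hl
  rcases eq_or_ne l [] with rfl | hne
  · simp
  · have hw := isCycle_walk hl hne
    have := telescope (f := G.psiFun a) (g := G.gg a) hw (fun e he => by
      have hintra := walk_edge_intra hw Relation.ReflTransGen.refl he
      rw [psiFun, dif_pos hintra])
    rw [this, sub_self]

/-- The main isomorphism. -/
noncomputable def hrEquiv (G : Dgraph V E) : (HR A G) ≃+ (G.Idx → A) where
  toFun f := G.phiFun f.1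
  invFun a := ⟨G.psiFun a, G.psi_balanced a⟩
  left_inv := by
    intro f
    have hf : BalancedE A G f.1 := f.2
    apply Subtype.ext
    funext e
    show G.psiFun (G.phiFun f.1) e = f.1 e
    by_cases h : G.scSetoid.r (G.src e) (G.tgt e)
    · rw [psiFun, dif_pos h]
      have hgg : ∀ v, G.gg (G.phiFun f.1) v = G.gf f.1 v := by
        intro v
        by_cases hv : v ≠ G.bp v
        · rw [gg, dif_pos hv]; rfl
        · rw [gg, dif_neg hv, G.gf_bp hf (not_ne_iff.mp hv).symm]
      rw [hgg, hgg, G.gf_edge hf h]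
      abel
    · rw [psiFun, dif_neg h]
      rfl
  right_inv := by
    intro a
    funext s
    cases s with
    | inl v =>
      show G.gf (G.psiFun a) v.1 = a (Sum.inl v)

      have := telescope (f := G.psiFun a) (g := G.gg a) (G.walkTo_spec v.1) (fun e he => by
        rw [psiFun, dif_pos (G.walkTo_intra v.1 he)])
      rw [gf, this, gg, dif_pos v.2, gg, dif_neg (not_ne_iff.mpr (G.bp_bp v.1).symm)]
      simp
    | inr e =>
      show G.psiFun a e.1 = a (Sum.inr e)
      rw [psiFun, dif_neg e.2]
  map_add' := by
    intro f g
    funext s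
    cases s with
    | inl v =>
      show G.gf (f.1 + g.1) v.1 = G.gf f.1 v.1 + G.gf g.1 v.1
      rw [gf, gf, gf, show (G.walkTo v.1).map (f.1 + g.1)
          = (G.walkTo v.1).map (fun e => f.1 e + g.1 e) from rfl, sum_map_add]
    | inr e => rfl

/-- The non-basepoint vertices biject with the complement of the components. -/
noncomputable def fixedEquiv (G : Dgraph V E) : {v : V // v = G.bp v} ≃ Quotient G.scSetoid where
  toFun x := Quotient.mk G.scSetoid x.1
  invFun q := ⟨q.out, by show q.out = G.bp q.out; unfold bp; rw [Quotient.out_eq]⟩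
  left_inv x := Subtype.ext x.2.symm
  right_inv q := Quotient.out_eq q

instance (G : Dgraph V E) [Finite V] [Finite E] : Finite G.Idx := by
  unfold Idx; infer_instance

lemma card_idx (G : Dgraph V E) [Fintype V] [Fintype E] :
    Nat.card G.Idx = Nat.card V - G.numSCC + G.numCrossEdges := by
  classical
  have h0 : Nat.card G.Idx
      = Nat.card {v : V // v ≠ G.bp v} + Nat.card {e : E // ¬ G.scSetoid.r (G.src e) (G.tgt e)} :=
    Nat.card_sum
  have h1 : Nat.card {v : V // v = G.bp v} + Nat.card {v : V // v ≠ G.bp v} = Nat.card V := by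
    rw [← Nat.card_sum]
    exact Nat.card_congr (Equiv.sumCompl (fun v => v = G.bp v))
  have h2 : Nat.card {v : V // v = G.bp v} = G.numSCC := Nat.card_congr G.fixedEquiv
  have h3 : Nat.card {e : E // ¬ G.scSetoid.r (G.src e) (G.tgt e)} = G.numCrossEdges := rfl
  omega

end Dgraph


/-- For a finite weakly connected directed graph with `k̄(G)` strongly
connected components and `r(G)` edges joining distinct components, the group `HR(E, A)` of
rigid-balanced functions on edges is isomorphic to `A^(|V| - k̄(G) + r(G))`. -/
theorem stmt10 (V E : Type) [Fintype V] [Fintype E] (A : Type) [AddCommGroup A]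
    (G : Dgraph V E) (hG : G.WeaklyConnected) :
    Nonempty (Dgraph.HR A G ≃+
      (Fin (Nat.card V - G.numSCC + G.numCrossEdges) → A)) := by
  classical
  exact ⟨(Dgraph.hrEquiv G).trans
    (AddEquiv.arrowCongr (Finite.equivFinOfCardEq (Dgraph.card_idx G)) (AddEquiv.refl A))⟩
end

section
/- Let G be a strongly connected directed graph, let e be an edge from x to y, and let f : E → A be rigid-balanced. Then there exists a directed path P from y to x not containing e, and the sum of the values of f along any such path equals -f(e). -/
section Aux

open Dgraph

variable {V E : Type}

/-- Walks as an inductive relation. -/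
inductive WalkR (G : Dgraph V E) : V → List E → V → Prop
  | nil (x : V) : WalkR G x [] x
  | cons (e : E) {l : List E} {y : V} :
      WalkR G (G.tgt e) l y → WalkR G (G.src e) (e :: l) y

lemma WalkR.append {G : Dgraph V E} {x z y : V} {l1 l2 : List E}
    (h1 : WalkR G x l1 z) (h2 : WalkR G z l2 y) : WalkR G x (l1 ++ l2) y := by
  induction h1 with
  | nil => simpa
  | cons e h ih => exact .cons e (ih h2)

lemma WalkR.split {G : Dgraph V E} {x y : V} {l1 l2 : List E}
    (h : WalkR G x (l1 ++ l2) y) : ∃ z, WalkR G x l1 z ∧ WalkR G z l2 y := by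
  induction l1 generalizing x with
  | nil => exact ⟨x, .nil x, h⟩
  | cons a t ih =>
    cases h with
    | cons _ h' =>
      obtain ⟨z, ha, hb⟩ := ih h'
      exact ⟨z, .cons a ha, hb⟩

lemma reach_walk {G : Dgraph V E} {x y : V} (h : G.Reach x y) :
    ∃ l, WalkR G x l y := by
  induction h using Relation.ReflTransGen.head_induction_on with
  | refl => exact ⟨[], .nil y⟩
  | head s _ ih =>
    obtain ⟨e, he1, he2⟩ := s
    obtain ⟨l, hl⟩ := ih
    subst he1 he2
    exact ⟨e :: l, .cons e hl⟩

lemma walk_avoid {G : Dgraph V E} {x y : V} {e : E} {l : List E}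
    (h : WalkR G x l y) (he : e ∈ l) :
    ∃ l', WalkR G x l' (G.src e) ∧ e ∉ l' := by
  induction l generalizing x with
  | nil => simp at he
  | cons a t ih =>
    cases h with
    | cons _ h' =>
      by_cases hae : a = e
      · subst hae; exact ⟨[], .nil _, by simp⟩
      · obtain ⟨l', h1, h2⟩ := ih h' (List.mem_of_ne_of_mem (fun hh => hae hh.symm) he)
        refine ⟨a :: l', .cons a h1, fun hh => ?_⟩
        rcases List.mem_cons.mp hh with rfl | hh
        · exact hae rfl
        · exact h2 hh

lemma exists_dup {α : Type} (l : List α) (h : ¬ l.Nodup) :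
    ∃ a l1 l2 l3, l = l1 ++ a :: l2 ++ a :: l3 := by
  induction l with
  | nil => simp at h
  | cons a t ih =>
    by_cases ha : a ∈ t
    · obtain ⟨s, u, rfl⟩ := List.append_of_mem ha
      exact ⟨a, [], s, u, by simp⟩
    · have ht : ¬ t.Nodup := by
        intro hnd; exact h (List.nodup_cons.mpr ⟨ha, hnd⟩)
      obtain ⟨b, l1, l2, l3, rfl⟩ := ih ht
      exact ⟨b, a :: l1, l2, l3, rfl⟩

lemma path_of_walk {G : Dgraph V E} {x y : V} :
    ∀ n (l : List E), l.length ≤ n → WalkR G x l y →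
      ∃ l', WalkR G x l' y ∧ l'.Nodup ∧ ∀ a ∈ l', a ∈ l := by
  intro n
  induction n with
  | zero =>
    intro l hl h
    have : l = [] := List.length_eq_zero_iff.mp (Nat.le_zero.mp hl)
    subst this
    exact ⟨[], h, by simp, by simp⟩
  | succ n ih =>
    intro l hl h
    by_cases hnd : l.Nodup
    · exact ⟨l, h, hnd, fun a ha => ha⟩
    · obtain ⟨a, l1, l2, l3, rfl⟩ := exists_dup l hnd
      obtain ⟨z, hz1, hz2⟩ := WalkR.split (l1 := l1 ++ a :: l2) h
      cases hz2 with
      | cons _ h'' =>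
        obtain ⟨w, hw1, hw2⟩ := WalkR.split (l1 := l1) hz1
        cases hw2 with
        | cons _ _ =>
          have hwalk : WalkR G x (l1 ++ a :: l3) y := hw1.append (.cons a h'')
          have hlen : (l1 ++ a :: l3).length ≤ n := by
            simp only [List.length_append, List.length_cons] at hl ⊢
            omega
          obtain ⟨l', hl1, hl2, hl3⟩ := ih _ hlen hwalk
          refine ⟨l', hl1, hl2, fun b hb => ?_⟩
          have := hl3 b hb
          simp only [List.mem_append, List.mem_cons] at this ⊢
          tauto

lemma walk_props {G : Dgraph V E} {x y : V} {l : List E} (h : WalkR G x l y) :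
    l.Chain' (fun a b => G.tgt a = G.src b) ∧
      ((l = [] ∧ x = y) ∨
        ∃ hne : l ≠ [], G.src (l.head hne) = x ∧ G.tgt (l.getLast hne) = y) := by
  induction h with
  | nil => exact ⟨List.isChain_nil, Or.inl ⟨rfl, rfl⟩⟩
  | cons e h ih =>
    obtain ⟨hc, hrest⟩ := ih
    rcases hrest with ⟨rfl, rfl⟩ | ⟨hne, h1, h2⟩
    · exact ⟨List.isChain_singleton _, Or.inr ⟨by simp, rfl, rfl⟩⟩
    · refine ⟨?_, Or.inr ⟨by simp, rfl, ?_⟩⟩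
      · refine List.isChain_cons.mpr ⟨fun b hb => ?_, hc⟩
        rw [List.head?_eq_head hne] at hb
        have hb' := Option.mem_some_iff.mp hb
        subst hb'
        exact h1.symm
      · rw [List.getLast_cons hne]
        exact h2

end Aux

/-- Let `G` be a finite strongly connected directed graph, `e` an edge
from `x` to `y`, and `f` a rigid-balanced function on edges. Then there is a directed path
from `y` to `x` not containing `e`, and the sum of `f` along any such path is `-f(e)`. -/
theorem stmt12 (V E : Type) [Fintype V] [Fintype E] (A : Type) [AddCommGroup A]
    (G : Dgraph V E) (hG : G.StronglyConnected)
    (f : E → A) (hf : Dgraph.BalancedE A G f) (e : E) :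
    (∃ l : List E, G.IsPathFrom l (G.tgt e) (G.src e) ∧ e ∉ l) ∧
    (∀ l : List E, G.IsPathFrom l (G.tgt e) (G.src e) → e ∉ l → (l.map f).sum = - f e) := by
  constructor
  · -- existence
    obtain ⟨l0, hl0⟩ := reach_walk (hG (G.tgt e) (G.src e))
    obtain ⟨l1, hl1, he1⟩ : ∃ l1, WalkR G (G.tgt e) l1 (G.src e) ∧ e ∉ l1 := by
      by_cases hmem : e ∈ l0
      · exact walk_avoid hl0 hmem
      · exact ⟨l0, hl0, hmem⟩
    obtain ⟨l', hw, hnd, hsub⟩ := path_of_walk l1.length l1 le_rfl hl1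
    obtain ⟨hc, hend⟩ := walk_props hw
    exact ⟨l', ⟨hnd, hc, hend⟩, fun hh => he1 (hsub e hh)⟩
  · -- uniqueness of the sum
    intro l hp he
    obtain ⟨hnd, hc, hend⟩ := hp
    have hcyc : G.IsCycle (e :: l) := by
      refine ⟨List.nodup_cons.mpr ⟨he, hnd⟩, ?_, ?_⟩
      · refine List.isChain_cons.mpr ⟨fun b hb => ?_, hc⟩
        rcases hend with ⟨rfl, _⟩ | ⟨hne, h1, _⟩
        · simp at hb
        · rw [List.head?_eq_head hne] at hb
          have hb' := Option.mem_some_iff.mp hb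
          subst hb'
          exact h1.symm
      · intro _
        rcases hend with ⟨rfl, hxy⟩ | ⟨hne, h1, h2⟩
        · simpa using hxy
        · rw [List.getLast_cons hne]
          simpa using h2
    have := hf (e :: l) hcyc
    simp only [List.map_cons, List.sum_cons] at this
    exact eq_neg_of_add_eq_zero_right this
end
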